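/- arXiv:2407.18750 — 10 statements merged into one kernel-verified Lean document; each statement's English description precedes it below -/
import Mathlib

section
/- Let n be a positive integer, let A be an n×n row-stochastic real matrix such that some power of A has a strictly positive column, let D be an n×n column-stochastic real matrix, and let Q be the 2n×2n block lower-triangular matrix Q = [[A, 0], [I − A, D]]. Assume that ker((Q − I)²) = ker(Q − I) (as subspaces of ℝ^{2n}) and that every complex root μ ≠ 1 of the characteristic polynomial of Q satisfies |μ| < 1. Then there exist a real 2n×2n matrix P, a constant Γ > 0, and γ ∈ (0,1) such that |(Q^k)_{i,j} − P_{i,j}| ≤ Γ·γ^k for all k ≥ 1 and all indices i, j; moreover there is a vector π ∈ ℝ^n with π_l ≥ 0, Σ_l π_l = 1 and πᵀA = πᵀ such that P_{j,l} = π_l for all j, l ∈ {1,…,n}, and P_{j,l} = 0 for all j ∈ {1,…,n} and l ∈ {n+1,…,2n}. -/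
open Matrix Filter Polynomial
open scoped ENNReal NNReal

attribute [local instance] Matrix.linftyOpNormedRing Matrix.linftyOpNormedAlgebra

section FLUEaux
variable {N : Type*} [Fintype N] [DecidableEq N]



lemma entry_le_norm (M : Matrix N N ℂ) (i j : N) : ‖M i j‖ ≤ ‖M‖ := by
  have h1 : ‖M i j‖₊ ≤ ‖M‖₊ := by
    rw [Matrix.linfty_opNNNorm_def]
    exact le_trans (Finset.single_le_sum (f := fun j' => ‖M i j'‖₊)
        (fun a _ => zero_le) (Finset.mem_univ j))
      (Finset.le_sup (f := fun i => ∑ j : N, ‖M i j‖₊) (Finset.mem_univ i))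
  exact h1

lemma mem_spectrum_iff_root (M : Matrix N N ℂ) (μ : ℂ) :
    μ ∈ spectrum ℂ M ↔ M.charpoly.IsRoot μ := by
  rw [spectrum.mem_iff]
  have halg : (algebraMap ℂ (Matrix N N ℂ)) μ = Matrix.scalar N μ := by
    simp [Matrix.algebraMap_eq_diagonal, Matrix.scalar_apply]
  rw [halg]
  rw [Matrix.isUnit_iff_isUnit_det, isUnit_iff_ne_zero, not_ne_iff]
  unfold Matrix.charpoly IsRoot
  rw [_root_.eval_det, Matrix.matPolyEquiv_charmatrix]
  simp



lemma pow_norm_bound [Nonempty N] (M : Matrix N N ℂ)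
    (h : ∀ μ ∈ spectrum ℂ M, ‖μ‖₊ < 1) :
    ∃ Γ γ : ℝ, 0 < Γ ∧ 0 < γ ∧ γ < 1 ∧ ∀ k, 1 ≤ k → ‖M ^ k‖ ≤ Γ * γ ^ k := by
  haveI : CompleteSpace (Matrix N N ℂ) := FiniteDimensional.complete ℂ _
  haveI : Nontrivial (Matrix N N ℂ) := ⟨⟨0, 1, fun h => one_ne_zero (α := ℂ) (by
    have := congrFun (congrFun h (Classical.arbitrary N)) (Classical.arbitrary N)
    simpa [Matrix.one_apply] using this.symm)⟩⟩
  have hSR : spectralRadius ℂ M < 1 := by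
    have := spectrum.spectralRadius_lt_of_forall_lt_of_nonempty (spectrum.nonempty M)
      (r := 1) h
    simpa using this
  obtain ⟨c, hc1, hc2⟩ := exists_between hSR
  have hctop : c ≠ ⊤ := (hc2.trans_le le_top).ne
  have htend := spectrum.pow_nnnorm_pow_one_div_tendsto_nhds_spectralRadius M
  have hev : ∀ᶠ (k : ℕ) in atTop, (‖M ^ k‖₊ : ℝ≥0∞) ^ (1 / (k:ℝ)) < c :=
    htend.eventually_lt_const hc1
  obtain ⟨K, hK⟩ := hev.exists_forall_of_atTop
  set γ : ℝ := max (c.toReal) (1/2) with hγdef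
  have hγpos : 0 < γ := lt_of_lt_of_le (by norm_num) (le_max_right _ _)
  have hγlt1 : γ < 1 := by
    have : c.toReal < 1 := by
      have := ENNReal.toReal_lt_toReal hctop (by norm_num : (1:ℝ≥0∞) ≠ ⊤)
      simpa using this.mpr hc2
    exact max_lt this (by norm_num)
  have hbig : ∀ k, K ≤ k → 1 ≤ k → ‖M ^ k‖ ≤ γ ^ k := by
    intro k hKk h1k
    have hlt := hK k hKk
    have hkne : (k : ℝ) ≠ 0 := Nat.cast_ne_zero.mpr (by omega)
    have h2 : (‖M ^ k‖₊ : ℝ≥0∞) ≤ c ^ (k : ℕ) := by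
      have h3 : ((‖M ^ k‖₊ : ℝ≥0∞) ^ (1 / (k:ℝ))) ^ (k : ℕ) ≤ c ^ (k:ℕ) :=
        pow_le_pow_left' hlt.le k
      rwa [← ENNReal.rpow_natCast ((‖M ^ k‖₊ : ℝ≥0∞) ^ (1 / (k:ℝ))), ← ENNReal.rpow_mul,
        one_div, inv_mul_cancel₀ hkne, ENNReal.rpow_one] at h3
    have h4 : ‖M ^ k‖ ≤ c.toReal ^ k := by
      have := ENNReal.toReal_mono (by exact ENNReal.pow_ne_top hctop) h2
      simpa [ENNReal.toReal_pow] using this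
    exact h4.trans (pow_le_pow_left₀ (ENNReal.toReal_nonneg) (le_max_left _ _) k)
  set Γ : ℝ := (∑ k ∈ Finset.range (K+1), ‖M ^ k‖ / γ ^ k) + 1 with hΓdef
  have hΓ1 : 1 ≤ Γ := by
    have : 0 ≤ ∑ k ∈ Finset.range (K+1), ‖M ^ k‖ / γ ^ k :=
      Finset.sum_nonneg fun k _ => div_nonneg (norm_nonneg _) (pow_nonneg hγpos.le k)
    simp [hΓdef]; linarith
  refine ⟨Γ, γ, by linarith, hγpos, hγlt1, ?_⟩
  intro k h1k
  by_cases hk : K ≤ k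
  · calc ‖M ^ k‖ ≤ γ ^ k := hbig k hk h1k
      _ ≤ Γ * γ ^ k := le_mul_of_one_le_left (pow_nonneg hγpos.le k) hΓ1
  · push_neg at hk
    have hmem : k ∈ Finset.range (K+1) := Finset.mem_range.mpr (by omega)
    have : ‖M ^ k‖ / γ ^ k ≤ Γ := by
      have := Finset.single_le_sum (f := fun k => ‖M ^ k‖ / γ ^ k)
        (fun i _ => div_nonneg (norm_nonneg _) (pow_nonneg hγpos.le i)) hmem
      simp only [hΓdef]; linarith
    calc ‖M ^ k‖ = (‖M ^ k‖ / γ ^ k) * γ ^ k := by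
          field_simp
      _ ≤ Γ * γ ^ k := mul_le_mul_of_nonneg_right this (pow_nonneg hγpos.le k)

lemma proj_exists (V : Type*) [AddCommGroup V] [Module ℂ V] [FiniteDimensional ℂ V]
    (f : Module.End ℂ V) (h2 : ∀ v, (f - 1) ((f - 1) v) = 0 → (f - 1) v = 0) :
    ∃ p : Module.End ℂ V, p * p = p ∧ f * p = p ∧ p * f = p ∧
      (∀ v, f v = v → p v = v) := by
  set K := LinearMap.ker (f - 1) with hK
  set R := LinearMap.range (f - 1) with hR
  have hmemK : ∀ v, v ∈ K ↔ f v = v := by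
    intro v
    simp [hK, LinearMap.mem_ker, sub_eq_zero, LinearMap.sub_apply]
  have hdisj : K ⊓ R = ⊥ := by
    rw [Submodule.eq_bot_iff]
    rintro x ⟨hxK, hxR⟩
    obtain ⟨z, hz⟩ := hxR
    have := h2 z (by rw [hz]; exact hxK)
    rw [hz] at this; exact this
  have hc : IsCompl K R := by
    constructor
    · exact disjoint_iff.mpr hdisj
    · rw [codisjoint_iff]
      apply Submodule.eq_top_of_finrank_eq
      have h1 := Submodule.finrank_sup_add_finrank_inf_eq K R
      have h2 := LinearMap.finrank_range_add_finrank_ker (f - 1)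
      rw [hdisj] at h1
      simp only [finrank_bot, add_zero] at h1
      rw [h1, ← hK, ← hR] at *
      omega
  set p : Module.End ℂ V := K.subtype.comp (K.projectionOnto R hc) with hp
  have hpK : ∀ x ∈ K, p x = x := by
    intro x hx
    simp [hp, Submodule.projectionOnto_apply_left hc ⟨x, hx⟩]
  have hpR : ∀ x ∈ R, p x = 0 := by
    intro x hx
    simp [hp, Submodule.projectionOnto_apply_right hc ⟨x, hx⟩]
  have hpmem : ∀ x, p x ∈ K := fun x => (K.projectionOnto R hc x).2
  have hfK : ∀ x ∈ K, f x = x := fun x hx => (hmemK x).mp hx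
  refine ⟨p, ?_, ?_, ?_, fun v hv => hpK v ((hmemK v).mpr hv)⟩
  · ext x; exact hpK _ (hpmem x)
  · ext x
    simp only [Module.End.mul_apply]
    exact hfK _ (hpmem x)
  · ext x
    simp only [Module.End.mul_apply]
    have hfx : f x = x + (f - 1) x := by simp [LinearMap.sub_apply]
    rw [hfx, map_add, hpR _ ⟨x, rfl⟩, add_zero]


lemma mulVec_map_re (R : Matrix N N ℝ) (v : N → ℂ) (i : N) :
    (((R.map Complex.ofReal).mulVec v) i).re = (R.mulVec (fun j => (v j).re)) i := by
  simp [Matrix.mulVec, dotProduct, Complex.re_sum, Complex.re_ofReal_mul]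

lemma mulVec_map_im (R : Matrix N N ℝ) (v : N → ℂ) (i : N) :
    (((R.map Complex.ofReal).mulVec v) i).im = (R.mulVec (fun j => (v j).im)) i := by
  simp [Matrix.mulVec, dotProduct, Complex.im_sum, Complex.im_ofReal_mul]

lemma hker_complex (R : Matrix N N ℝ)
    (hker : ∀ w : N → ℝ, R.mulVec (R.mulVec w) = 0 → R.mulVec w = 0)
    (v : N → ℂ)
    (h : (R.map Complex.ofReal).mulVec ((R.map Complex.ofReal).mulVec v) = 0) :
    (R.map Complex.ofReal).mulVec v = 0 := by
  set Rc := R.map Complex.ofReal with hRc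
  have hre : R.mulVec (R.mulVec (fun j => (v j).re)) = 0 := by
    funext i
    have := congrFun h i
    have h2 := mulVec_map_re R (Rc.mulVec v) i
    rw [this] at h2
    simp only [Pi.zero_apply, Complex.zero_re] at h2
    have h3 : (fun j => ((Rc.mulVec v) j).re) = R.mulVec (fun j => (v j).re) := by
      funext j; exact mulVec_map_re R v j
    rw [h3] at h2
    exact h2.symm ▸ rfl
  have him : R.mulVec (R.mulVec (fun j => (v j).im)) = 0 := by
    funext i
    have := congrFun h i
    have h2 := mulVec_map_im R (Rc.mulVec v) i
    rw [this] at h2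
    simp only [Pi.zero_apply, Complex.zero_im] at h2
    have h3 : (fun j => ((Rc.mulVec v) j).im) = R.mulVec (fun j => (v j).im) := by
      funext j; exact mulVec_map_im R v j
    rw [h3] at h2
    exact h2.symm ▸ rfl
  have h1 := hker _ hre
  have h2 := hker _ him
  funext i
  have e1 := mulVec_map_re R v i
  have e2 := mulVec_map_im R v i
  rw [congrFun h1 i] at e1
  rw [congrFun h2 i] at e2
  exact Complex.ext (by simpa using e1) (by simpa using e2)


lemma scalar_mulVec (μ : ℂ) (v : N → ℂ) : (Matrix.scalar N μ).mulVec v = μ • v := by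
  funext i
  simp [Matrix.scalar_apply, Matrix.mulVec_diagonal]

lemma det_eq_zero_iff_root (M : Matrix N N ℂ) (μ : ℂ) :
    (Matrix.scalar N μ - M).det = 0 ↔ M.charpoly.IsRoot μ := by
  unfold Matrix.charpoly IsRoot
  rw [_root_.eval_det, Matrix.matPolyEquiv_charmatrix]
  simp

lemma spectrum_exists_eigvec (M : Matrix N N ℂ) (μ : ℂ) (h : μ ∈ spectrum ℂ M) :
    ∃ v : N → ℂ, v ≠ 0 ∧ M.mulVec v = μ • v := by
  rw [spectrum.mem_iff] at h
  have halg : (algebraMap ℂ (Matrix N N ℂ)) μ = Matrix.scalar N μ := by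
    simp [Matrix.algebraMap_eq_diagonal, Matrix.scalar_apply]
  rw [halg, Matrix.isUnit_iff_isUnit_det, isUnit_iff_ne_zero, not_ne_iff] at h
  obtain ⟨v, hv0, hv⟩ := (Matrix.exists_mulVec_eq_zero_iff).mpr h
  refine ⟨v, hv0, ?_⟩
  rw [Matrix.sub_mulVec, scalar_mulVec, sub_eq_zero] at hv
  exact hv.symm

lemma isRoot_of_eigvec (M : Matrix N N ℂ) (μ : ℂ) (v : N → ℂ) (hv0 : v ≠ 0)
    (h : M.mulVec v = μ • v) : M.charpoly.IsRoot μ := by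
  rw [← det_eq_zero_iff_root]
  rw [← Matrix.exists_mulVec_eq_zero_iff]
  exact ⟨v, hv0, by rw [Matrix.sub_mulVec, scalar_mulVec, h, sub_self]⟩

lemma complex_key [Nonempty N] (Qc : Matrix N N ℂ)
    (hker' : ∀ v : N → ℂ,
      (Qc - 1).mulVec ((Qc - 1).mulVec v) = 0 → (Qc - 1).mulVec v = 0)
    (hspec' : ∀ μ : ℂ, Qc.charpoly.IsRoot μ → μ ≠ 1 → ‖μ‖ < 1) :
    ∃ (Pc : Matrix N N ℂ) (Γ γ : ℝ), 0 < Γ ∧ 0 < γ ∧ γ < 1 ∧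
      ∀ k, 1 ≤ k → ‖Qc ^ k - Pc‖ ≤ Γ * γ ^ k := by
  set f : Module.End ℂ (N → ℂ) := Matrix.toLinAlgEquiv' Qc with hf
  have hfv : ∀ v : N → ℂ, (f - 1) v = (Qc - 1).mulVec v := by
    intro v
    simp [hf, Matrix.toLinAlgEquiv'_apply, Matrix.sub_mulVec, Matrix.one_mulVec,
      LinearMap.sub_apply]
  obtain ⟨p, hpp, hfp, hpf, hfix⟩ := proj_exists (N → ℂ) f (by
    intro v h
    rw [hfv, hfv] at h
    rw [hfv]
    exact hker' v h)
  set Pc : Matrix N N ℂ := LinearMap.toMatrixAlgEquiv' p with hPc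
  have hlinPc : Matrix.toLinAlgEquiv' Pc = p := Matrix.toLinAlgEquiv'_toMatrixAlgEquiv' p
  have hPP : Pc * Pc = Pc := by
    apply Matrix.toLinAlgEquiv'.injective
    rw [_root_.map_mul, hlinPc, hpp]
  have hQP : Qc * Pc = Pc := by
    apply Matrix.toLinAlgEquiv'.injective
    rw [_root_.map_mul, hlinPc, ← hf, hfp]
  have hPQ : Pc * Qc = Pc := by
    apply Matrix.toLinAlgEquiv'.injective
    rw [_root_.map_mul, hlinPc, ← hf, hpf]
  set M : Matrix N N ℂ := Qc - Pc with hM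
  have hPM : Pc * M = 0 := by rw [hM, Matrix.mul_sub, hPQ, hPP, sub_self]
  have hPQk : ∀ k, Pc * Qc ^ k = Pc := by
    intro k
    induction k with
    | zero => simp
    | succ k ih => rw [pow_succ, ← mul_assoc, ih, hPQ]
  have hQPk : ∀ m, Qc ^ m * Pc = Pc := by
    intro m
    induction m with
    | zero => simp
    | succ m ih2 => rw [pow_succ, mul_assoc, hQP, ih2]
  have hMpow : ∀ k, 1 ≤ k → M ^ k = Qc ^ k - Pc := by
    intro k hk
    induction k with
    | zero => omega
    | succ k ih =>
      by_cases hk1 : 1 ≤ k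
      · rw [pow_succ, ih hk1, hM, Matrix.sub_mul, Matrix.mul_sub, Matrix.mul_sub,
          hQPk, hPQ, hPP, sub_self, sub_zero, ← pow_succ]
      · have : k = 0 := by omega
        subst this
        simp [hM]
  have hspecM : ∀ μ ∈ spectrum ℂ M, ‖μ‖₊ < 1 := by
    intro μ hμ
    obtain ⟨v, hv0, hv⟩ := spectrum_exists_eigvec M μ hμ
    by_cases hμ0 : μ = 0
    · simp [hμ0]
    have hPv : Pc.mulVec v = 0 := by
      have h1 : Pc.mulVec (M.mulVec v) = 0 := by
        rw [Matrix.mulVec_mulVec, hPM, Matrix.zero_mulVec]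
      rw [hv, Matrix.mulVec_smul] at h1
      exact (smul_eq_zero.mp h1).resolve_left hμ0
    have hQv : Qc.mulVec v = μ • v := by
      have h2 : M.mulVec v = Qc.mulVec v - Pc.mulVec v := Matrix.sub_mulVec _ _ _
      rw [hPv, sub_zero] at h2
      rw [← h2, hv]
    have hμ1 : μ ≠ 1 := by
      intro h1
      subst h1
      rw [one_smul] at hQv
      have hfvv : f v = v := by rw [hf, Matrix.toLinAlgEquiv'_apply, hQv]
      have hpv : p v = v := hfix v hfvv
      rw [← hlinPc, Matrix.toLinAlgEquiv'_apply, hPv] at hpv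
      exact hv0 hpv.symm
    have habs := hspec' μ (isRoot_of_eigvec Qc μ v hv0 hQv) hμ1
    exact_mod_cast habs
  obtain ⟨Γ, γ, hΓ, hγ0, hγ1, hb⟩ := pow_norm_bound M hspecM
  refine ⟨Pc, Γ, γ, hΓ, hγ0, hγ1, fun k hk => ?_⟩
  rw [← hMpow k hk]
  exact hb k hk


lemma pow_nonneg_stoch {n : ℕ} (A : Matrix (Fin n) (Fin n) ℝ)
    (h0 : ∀ i j, 0 ≤ A i j) (h1 : ∀ i, ∑ j, A i j = 1) (k : ℕ) :
    (∀ i j, 0 ≤ (A ^ k) i j) ∧ (∀ i, ∑ j, (A ^ k) i j = 1) := by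
  induction k with
  | zero =>
    constructor
    · intro i j
      by_cases h : i = j <;> simp [Matrix.one_apply, h]
    · intro i; simp [Matrix.one_apply]
  | succ k ih =>
    constructor
    · intro i j
      rw [pow_succ, Matrix.mul_apply]
      exact Finset.sum_nonneg fun l _ => mul_nonneg (ih.1 i l) (h0 l j)
    · intro i
      simp only [pow_succ, Matrix.mul_apply]
      rw [Finset.sum_comm]
      have : ∀ l, ∑ j, (A ^ k) i l * A l j = (A ^ k) i l := by
        intro l; rw [← Finset.mul_sum, h1 l, mul_one]
      simp only [this]
      exact ih.2 i

lemma const_col {n : ℕ} (a : Matrix (Fin n) (Fin n) ℝ)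
    (h0 : ∀ i j, 0 ≤ a i j) (h1 : ∀ i, ∑ j, a i j = 1)
    (j₀ : Fin n) (hpos : ∀ i, 0 < a i j₀)
    (c : Fin n → ℝ) (hc : ∀ i, c i = ∑ q, a i q * c q) :
    ∀ i, c i = c j₀ := by
  have key : ∀ (c : Fin n → ℝ), (∀ i, c i = ∑ q, a i q * c q) →
      ∀ i, (∀ q, c q ≤ c i) → c j₀ = c i := by
    intro c hc i hi
    have hs : ∑ q, a i q * (c i - c q) = 0 := by
      simp only [mul_sub]
      rw [Finset.sum_sub_distrib, ← Finset.sum_mul, h1 i, one_mul, ← hc i, sub_self]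
    have hterm : ∀ q ∈ Finset.univ, 0 ≤ a i q * (c i - c q) :=
      fun q _ => mul_nonneg (h0 i q) (sub_nonneg.mpr (hi q))
    have := (Finset.sum_eq_zero_iff_of_nonneg hterm).mp hs j₀ (Finset.mem_univ j₀)
    have h2 : c i - c j₀ = 0 := by
      rcases mul_eq_zero.mp this with h | h
      · exact absurd h (ne_of_gt (hpos i))
      · exact h
    linarith
  haveI : Nonempty (Fin n) := ⟨j₀⟩
  obtain ⟨imax, _, hmax⟩ := Finset.exists_max_image Finset.univ c ⟨j₀, Finset.mem_univ j₀⟩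
  obtain ⟨imin, _, hmin⟩ := Finset.exists_min_image Finset.univ c ⟨j₀, Finset.mem_univ j₀⟩
  have hMax := key c hc imax (fun q => hmax q (Finset.mem_univ q))
  have hMin : c j₀ = c imin := by
    have := key (fun i => -c i) (by
      intro i
      simp only [mul_neg, Finset.sum_neg_distrib, ← hc i]) imin
      (fun q => neg_le_neg (hmin q (Finset.mem_univ q)))
    simpa using this
  intro i
  have := hmax i (Finset.mem_univ i)
  have := hmin i (Finset.mem_univ i)
  linarith

end FLUEaux

/-- **Theorem 3e of the FLUE paper.**
Let `A` be an `n×n` row-stochastic matrix some power of which has a strictly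
positive column, `D` an `n×n` column-stochastic matrix, and
`Q = [[A, 0], [I - A, D]]` the `2n×2n` block lower-triangular matrix.
If the eigenvalue `1` of `Q` is semisimple (`ker (Q-I)² = ker (Q-I)`) and all
other complex roots of the characteristic polynomial of `Q` lie strictly inside
the unit disc, then the powers of `Q` converge geometrically to a matrix `P`
whose first `n` rows are identical, equal to `(πᵀ, 0)` for a stationary
distribution `π` of `A`. -/
theorem flue_theorem3e
    (n : ℕ) (hn : 0 < n)
    (A : Matrix (Fin n) (Fin n) ℝ)
    (hA_nonneg : ∀ i j, 0 ≤ A i j)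
    (hA_rows : ∀ i, ∑ j, A i j = 1)
    (hA_pos : ∃ k₀ : ℕ, 1 ≤ k₀ ∧ ∃ j₀ : Fin n, ∀ i, 0 < (A ^ k₀) i j₀)
    (D : Matrix (Fin n) (Fin n) ℝ)
    (hD_nonneg : ∀ i j, 0 ≤ D i j)
    (hD_cols : ∀ j, ∑ i, D i j = 1)
    (Q : Matrix (Fin n ⊕ Fin n) (Fin n ⊕ Fin n) ℝ)
    (hQ : Q = Matrix.fromBlocks A 0 (1 - A) D)
    (hker : ∀ v : Fin n ⊕ Fin n → ℝ,
      (Q - 1).mulVec ((Q - 1).mulVec v) = 0 ↔ (Q - 1).mulVec v = 0)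
    (hspec : ∀ μ : ℂ, ((Q.map Complex.ofReal).charpoly).IsRoot μ → μ ≠ 1 →
      ‖μ‖ < 1) :
    ∃ (P : Matrix (Fin n ⊕ Fin n) (Fin n ⊕ Fin n) ℝ) (Γ γ : ℝ),
      0 < Γ ∧ 0 < γ ∧ γ < 1 ∧
      (∀ k : ℕ, 1 ≤ k → ∀ i j, |(Q ^ k) i j - P i j| ≤ Γ * γ ^ k) ∧
      ∃ π : Fin n → ℝ,
        (∀ l, 0 ≤ π l) ∧ (∑ l, π l = 1) ∧ Matrix.vecMul π A = π ∧
        (∀ j l : Fin n, P (Sum.inl j) (Sum.inl l) = π l) ∧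
        (∀ j l : Fin n, P (Sum.inl j) (Sum.inr l) = 0) := by
  classical
  haveI : Nonempty (Fin n) := ⟨⟨0, hn⟩⟩
  haveI : Nonempty (Fin n ⊕ Fin n) := ⟨Sum.inl ⟨0, hn⟩⟩
  set Qc : Matrix (Fin n ⊕ Fin n) (Fin n ⊕ Fin n) ℂ := Q.map Complex.ofReal with hQc
  have hmapsub : (Q - 1).map Complex.ofReal = Qc - 1 := by
    ext i j
    by_cases h : i = j <;>
      simp [Matrix.map_apply, Matrix.sub_apply, Matrix.one_apply, h, hQc]
  have hkerC : ∀ v : (Fin n ⊕ Fin n) → ℂ,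
      (Qc - 1).mulVec ((Qc - 1).mulVec v) = 0 → (Qc - 1).mulVec v = 0 := by
    intro v hv
    rw [← hmapsub] at hv ⊢
    exact hker_complex (Q - 1) (fun w => (hker w).mp) v hv
  obtain ⟨Pc, Γ, γ, hΓ, hγ0, hγ1, hbound⟩ := complex_key Qc hkerC hspec
  have hpowmap : ∀ k : ℕ, Qc ^ k = (Q ^ k).map Complex.ofReal := by
    intro k
    induction k with
    | zero =>
      ext i j
      by_cases h : i = j <;> simp [Matrix.map_apply, Matrix.one_apply, h]
    | succ k ih =>
      rw [pow_succ, pow_succ, ih, hQc]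
      ext i j
      simp only [Matrix.mul_apply, Matrix.map_apply]
      push_cast
      ring
  set P : Matrix (Fin n ⊕ Fin n) (Fin n ⊕ Fin n) ℝ :=
    Matrix.of (fun i j => (Pc i j).re) with hP
  have hb2 : ∀ k, 1 ≤ k → ∀ i j, |(Q ^ k) i j - P i j| ≤ Γ * γ ^ k := by
    intro k hk i j
    have h1 : ((Qc ^ k - Pc) i j).re = (Q ^ k) i j - P i j := by
      simp [hpowmap k, Matrix.sub_apply, Matrix.map_apply, hP]
    rw [← h1]
    calc |((Qc ^ k - Pc) i j).re|
        ≤ ‖(Qc ^ k - Pc) i j‖ := Complex.abs_re_le_norm _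
      _ ≤ ‖Qc ^ k - Pc‖ := entry_le_norm _ i j
      _ ≤ Γ * γ ^ k := hbound k hk
  have htend : ∀ i j, Filter.Tendsto (fun k => (Q ^ k) i j) Filter.atTop (nhds (P i j)) := by
    intro i j
    rw [← tendsto_sub_nhds_zero_iff]
    refine squeeze_zero_norm' (a := fun k : ℕ => Γ * γ ^ k) ?_ ?_
    · filter_upwards [Filter.eventually_ge_atTop 1] with k hk
      simpa [Real.norm_eq_abs] using hb2 k hk i j
    · simpa using (tendsto_pow_atTop_nhds_zero_of_lt_one (le_of_lt hγ0) hγ1).const_mul Γ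
  have hblock : ∀ k : ℕ, ∃ C, Q ^ k = Matrix.fromBlocks (A ^ k) 0 C (D ^ k) := by
    intro k
    induction k with
    | zero => exact ⟨0, by simp [← Matrix.fromBlocks_one]⟩
    | succ k ih =>
      obtain ⟨C, hC⟩ := ih
      refine ⟨C * A + D ^ k * (1 - A), ?_⟩
      rw [pow_succ, hC, hQ, Matrix.fromBlocks_multiply]
      simp [pow_succ]
  have htop1 : ∀ (k : ℕ) i j, (Q ^ k) (Sum.inl i) (Sum.inl j) = (A ^ k) i j := by
    intro k i j; obtain ⟨C, hC⟩ := hblock k; rw [hC]; rfl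
  have htop2 : ∀ (k : ℕ) i j, (Q ^ k) (Sum.inl i) (Sum.inr j) = 0 := by
    intro k i j; obtain ⟨C, hC⟩ := hblock k; rw [hC]; rfl
  set B : Matrix (Fin n) (Fin n) ℝ :=
    Matrix.of (fun i j => P (Sum.inl i) (Sum.inl j)) with hB
  have tendA : ∀ i j, Filter.Tendsto (fun k => (A ^ k) i j) Filter.atTop (nhds (B i j)) := by
    intro i j
    exact (htend (Sum.inl i) (Sum.inl j)).congr (fun k => htop1 k i j)
  have hPtr : ∀ i j, P (Sum.inl i) (Sum.inr j) = 0 := by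
    intro i j
    refine tendsto_nhds_unique (htend (Sum.inl i) (Sum.inr j)) ?_
    exact tendsto_const_nhds.congr (fun k => (htop2 k i j).symm)
  have hAk := pow_nonneg_stoch A hA_nonneg hA_rows
  have hBnn : ∀ i j, 0 ≤ B i j := fun i j =>
    ge_of_tendsto' (tendA i j) (fun k => (hAk k).1 i j)
  have hBsum : ∀ i, ∑ l, B i l = 1 := by
    intro i
    have h1 : Filter.Tendsto (fun k => ∑ l, (A ^ k) i l) Filter.atTop (nhds (∑ l, B i l)) :=
      tendsto_finset_sum _ (fun l _ => tendA i l)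
    have h2 : Filter.Tendsto (fun k => ∑ l, (A ^ k) i l) Filter.atTop (nhds 1) :=
      tendsto_const_nhds.congr (fun k => ((hAk k).2 i).symm)
    exact tendsto_nhds_unique h1 h2
  have hBA : ∀ i j, ∑ l, B i l * A l j = B i j := by
    intro i j
    have h1 : Filter.Tendsto (fun k => (A ^ (k + 1)) i j) Filter.atTop (nhds (B i j)) :=
      (tendA i j).comp (Filter.tendsto_add_atTop_nat 1)
    have h2 : Filter.Tendsto (fun k => (A ^ (k + 1)) i j) Filter.atTop
        (nhds (∑ l, B i l * A l j)) := by
      have h3 := tendsto_finset_sum Finset.univ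
        (fun l (_ : l ∈ Finset.univ) => (tendA i l).mul_const (A l j))
      apply h3.congr
      intro k
      rw [pow_succ, Matrix.mul_apply]
    exact tendsto_nhds_unique h2 h1
  obtain ⟨k₀, hk₀1, j₀, hj₀⟩ := hA_pos
  have hBcol : ∀ i l, B i l = B j₀ l := by
    intro i l
    have hrec : ∀ i', B i' l = ∑ q, (A ^ k₀) i' q * B q l := by
      intro i'
      have h1 : Filter.Tendsto (fun k => (A ^ (k₀ + k)) i' l) Filter.atTop (nhds (B i' l)) :=
        (tendA i' l).comp (by simpa [add_comm] using Filter.tendsto_add_atTop_nat k₀)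
      have h2 : Filter.Tendsto (fun k => (A ^ (k₀ + k)) i' l) Filter.atTop
          (nhds (∑ q, (A ^ k₀) i' q * B q l)) := by
        have h3 := tendsto_finset_sum Finset.univ
          (fun q (_ : q ∈ Finset.univ) => (tendA q l).const_mul ((A ^ k₀) i' q))
        apply h3.congr
        intro k
        rw [pow_add, Matrix.mul_apply]
      exact tendsto_nhds_unique h1 h2
    exact const_col (A ^ k₀) (hAk k₀).1 (hAk k₀).2 j₀ hj₀ (fun q => B q l) hrec i
  refine ⟨P, Γ, γ, hΓ, hγ0, hγ1, hb2, fun l => B j₀ l, fun l => hBnn j₀ l, hBsum j₀, ?_, ?_, hPtr⟩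
  · funext j
    show ∑ l, B j₀ l * A l j = B j₀ j
    exact hBA j₀ j
  · intro j l
    exact hBcol j l
end

section
/- Let M and N be N×N complex matrices such that each of them satisfies: ker((X − I)²) = ker(X − I), and every eigenvalue of X different from 1 has modulus strictly smaller than 1. Assume moreover that M and N have the same right fixed space and the same left fixed space, i.e. {v ∈ ℂ^N : M·v = v} = {v ∈ ℂ^N : N·v = v} and {v ∈ ℂ^N : vᵀ·M = vᵀ} = {v ∈ ℂ^N : vᵀ·N = vᵀ}. Then the limits lim_{k→∞} M^k and lim_{k→∞} N^k both exist (entrywise) and are equal. -/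
open Matrix Filter Polynomial Topology
open scoped NNReal ENNReal

namespace SameLimitAux

attribute [local instance] Matrix.linftyOpNormedRing Matrix.linftyOpNormedAlgebra

variable {n : ℕ}

lemma entry_norm_le (A : Matrix (Fin n) (Fin n) ℂ) (i j : Fin n) : ‖A i j‖ ≤ ‖A‖ := by
  rw [Matrix.linfty_opNorm_def]
  calc ‖A i j‖ = ((‖A i j‖₊ : ℝ≥0) : ℝ) := rfl
    _ ≤ ((∑ j', ‖A i j'‖₊ : ℝ≥0) : ℝ) := by
        exact_mod_cast Finset.single_le_sum (f := fun j' => ‖A i j'‖₊)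
          (fun _ _ => zero_le) (Finset.mem_univ j)
    _ ≤ _ := by
        exact_mod_cast Finset.le_sup (f := fun i => ∑ j', ‖A i j'‖₊) (Finset.mem_univ i)

lemma tendsto_entry {f : ℕ → Matrix (Fin n) (Fin n) ℂ} {P : Matrix (Fin n) (Fin n) ℂ}
    (h : Tendsto f atTop (𝓝 P)) (i j : Fin n) :
    Tendsto (fun k => f k i j) atTop (𝓝 (P i j)) := by
  rw [tendsto_iff_norm_sub_tendsto_zero] at ⊢
  replace h := tendsto_iff_norm_sub_tendsto_zero.1 h
  refine squeeze_zero (fun k => norm_nonneg _) (fun k => ?_) h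
  simpa [Matrix.sub_apply] using entry_norm_le (f k - P) i j

lemma pow_tendsto_zero {S : Matrix (Fin n) (Fin n) ℂ} (h : spectralRadius ℂ S < 1) :
    Tendsto (fun k : ℕ => S ^ k) atTop (𝓝 0) := by
  obtain ⟨c, hc, hc1⟩ := ENNReal.lt_iff_exists_nnreal_btwn.mp h
  have hc1' : (c : ℝ) < 1 := by exact_mod_cast hc1
  have hgel := spectrum.pow_nnnorm_pow_one_div_tendsto_nhds_spectralRadius S
  have hev : ∀ᶠ k : ℕ in atTop, (‖S ^ k‖₊ : ℝ≥0∞) ^ (1 / (k : ℝ)) < (c : ℝ≥0∞) :=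
    hgel.eventually_lt_const hc
  have key : ∀ᶠ k : ℕ in atTop, ‖S ^ k‖ ≤ (c : ℝ) ^ k := by
    filter_upwards [hev, eventually_ge_atTop 1] with k hk hk1
    have hk0 : (k : ℝ) ≠ 0 := by positivity
    have h2 : ((‖S ^ k‖₊ : ℝ≥0∞) ^ (1 / (k : ℝ))) ^ (k : ℝ) < (c : ℝ≥0∞) ^ (k : ℝ) := by
      apply ENNReal.rpow_lt_rpow hk (by positivity)
    rw [← ENNReal.rpow_mul, one_div_mul_cancel hk0, ENNReal.rpow_one] at h2
    have h3 : (‖S ^ k‖₊ : ℝ≥0∞) < (c : ℝ≥0∞) ^ (k : ℕ) := by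
      rwa [ENNReal.rpow_natCast] at h2
    have h4 : ‖S ^ k‖₊ < c ^ k := by
      rw [← ENNReal.coe_pow] at h3
      exact_mod_cast h3
    calc ‖S ^ k‖ = ((‖S ^ k‖₊ : ℝ≥0) : ℝ) := rfl
      _ ≤ ((c ^ k : ℝ≥0) : ℝ) := by exact_mod_cast h4.le
      _ = (c : ℝ) ^ k := by push_cast; ring
  exact squeeze_zero_norm' key (tendsto_pow_atTop_nhds_zero_of_lt_one c.coe_nonneg hc1')

lemma exists_pow_tendsto (X : Matrix (Fin n) (Fin n) ℂ)
    (hker : ∀ v : Fin n → ℂ,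
      (X - 1).mulVec ((X - 1).mulVec v) = 0 ↔ (X - 1).mulVec v = 0)
    (hspec : ∀ μ : ℂ, X.charpoly.IsRoot μ → μ ≠ 1 → ‖μ‖ < 1) :
    ∃ P, Tendsto (fun k : ℕ => X ^ k) atTop (𝓝 P) := by
  rcases Nat.eq_zero_or_pos n with hn | hn
  · subst hn
    haveI : Subsingleton (Matrix (Fin 0) (Fin 0) ℂ) :=
      ⟨fun a b => by ext i; exact i.elim0⟩
    exact ⟨1, by
      have : (fun k : ℕ => X ^ k) = fun _ => 1 := funext fun k => Subsingleton.elim _ _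
      rw [this]; exact tendsto_const_nhds⟩
  haveI : Nonempty (Fin n) := Fin.pos_iff_nonempty.mp hn
  set e := (Matrix.toLinAlgEquiv' : Matrix (Fin n) (Fin n) ℂ ≃ₐ[ℂ] _) with he
  set f := e X with hf
  set K := LinearMap.ker (f - 1) with hK
  set R := LinearMap.range (f - 1) with hR
  have hA : ∀ v, (f - 1) v = (X - 1).mulVec v := by
    intro v
    have : f - 1 = e (X - 1) := by rw [_root_.map_sub, _root_.map_one]
    rw [this, he]
    simp [Matrix.toLinAlgEquiv'_apply, Matrix.sub_mulVec, Matrix.one_mulVec]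
  have hdisj : Disjoint K R := by
    rw [Submodule.disjoint_def]
    rintro v hvK ⟨u, rfl⟩
    have h1 : (X - 1).mulVec ((X - 1).mulVec u) = 0 := by
      rw [← hA, ← hA]; exact hvK
    have h2 := (hker u).mp h1
    rw [hA, h2]
  have hcompl : IsCompl K R := by
    refine ⟨hdisj, codisjoint_iff.mpr ?_⟩
    apply Submodule.eq_top_of_finrank_eq
    have h1 := Submodule.finrank_sup_add_finrank_inf_eq K R
    rw [disjoint_iff.mp hdisj, finrank_bot, add_zero] at h1
    rw [h1, add_comm]
    exact LinearMap.finrank_range_add_finrank_ker (f - 1)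
  set π := K.projectionOnto R hcompl with hπ
  set P0 : (Fin n → ℂ) →ₗ[ℂ] (Fin n → ℂ) := K.subtype ∘ₗ π with hP0def
  have hP0mem : ∀ v, P0 v ∈ K := fun v => (π v).2
  have hP0K : ∀ v ∈ K, P0 v = v := by
    intro v hv
    have := Submodule.projectionOnto_apply_left hcompl ⟨v, hv⟩
    exact congrArg Subtype.val this
  have hP0R : ∀ v ∈ R, P0 v = 0 := by
    intro v hv
    have := Submodule.projectionOnto_apply_of_mem_right hcompl hv
    simp [hP0def]
    exact this
  have hfK : ∀ v ∈ K, f v = v := by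
    intro v hv
    have : (f - 1) v = 0 := hv
    rw [LinearMap.sub_apply, Module.End.one_apply, sub_eq_zero] at this
    exact this
  have hfR : ∀ v ∈ R, f v ∈ R := by
    rintro v ⟨u, rfl⟩
    exact ⟨f u, by simp [LinearMap.sub_apply, Module.End.one_apply, _root_.map_sub]⟩
  have hfP0 : f ∘ₗ P0 = P0 := LinearMap.ext fun v => hfK _ (hP0mem v)
  have hP0f : P0 ∘ₗ f = P0 := by
    apply LinearMap.ext
    intro v
    obtain ⟨k, r, hk, hr, hkr⟩ := Submodule.codisjoint_iff_exists_add_eq.mp hcompl.codisjoint v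
    have h1 : f v = k + f r := by rw [← hkr, _root_.map_add, hfK k hk]
    have h2 : P0 v = k := by
      rw [← hkr, _root_.map_add, hP0K k hk, hP0R r hr, add_zero]
    simp only [LinearMap.comp_apply, h1, _root_.map_add, hP0K k hk, hP0R _ (hfR r hr), add_zero, h2]
  have hP0P0 : P0 ∘ₗ P0 = P0 := LinearMap.ext fun v => hP0K _ (hP0mem v)
  set Pm := e.symm P0 with hPm
  have hePm : e Pm = P0 := e.apply_symm_apply P0
  have hXP : X * Pm = Pm := by
    apply e.injective
    rw [_root_.map_mul, hePm, ← hf]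
    exact hfP0
  have hPX : Pm * X = Pm := by
    apply e.injective
    rw [_root_.map_mul, hePm, ← hf]
    exact hP0f
  have hPP : Pm * Pm = Pm := by
    apply e.injective
    rw [_root_.map_mul, hePm]
    exact hP0P0
  set S := X - Pm with hS
  have hPS : Pm * S = 0 := by rw [hS, mul_sub, hPX, hPP, sub_self]
  have hpow : ∀ k : ℕ, X ^ (k + 1) = Pm + S ^ (k + 1) := by
    intro k
    induction k with
    | zero => simp [hS]
    | succ k ih =>
        have : X ^ (k + 2) = X * X ^ (k + 1) := by rw [← pow_succ']
        rw [this, ih, mul_add, hXP]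
        have hX' : X = Pm + S := by rw [hS]; abel
        rw [hX', add_mul]
        have : Pm * S ^ (k + 1) = 0 := by
          rw [pow_succ', ← mul_assoc, hPS, zero_mul]
        rw [this, zero_add, ← pow_succ']
  haveI : Nontrivial (Matrix (Fin n) (Fin n) ℂ) := by
    obtain ⟨i⟩ := (inferInstance : Nonempty (Fin n))
    refine ⟨0, 1, fun h => ?_⟩
    have := congrFun (congrFun h i) i
    simp [Matrix.one_apply] at this
  have hspecS : ∀ μ ∈ spectrum ℂ S, ‖μ‖₊ < 1 := by
    intro μ hμ
    by_cases hμ0 : μ = 0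
    · simp [hμ0]
    have hμ' : Module.End.HasEigenvalue (e S) μ := by
      rw [Module.End.hasEigenvalue_iff_mem_spectrum, AlgEquiv.spectrum_eq e]
      exact hμ
    obtain ⟨v, hv⟩ := hμ'.exists_hasEigenvector
    have heS : e S = f - P0 := by rw [hS, _root_.map_sub, hePm, hf]
    obtain ⟨k, r, hk, hr, hkr⟩ := Submodule.codisjoint_iff_exists_add_eq.mp hcompl.codisjoint v
    have h1 : e S v = f r := by
      rw [heS, ← hkr]
      simp only [LinearMap.sub_apply, _root_.map_add, hfK k hk, hP0K k hk, hP0R r hr, add_zero]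
      ring
    have hμv : μ • v = f r := by rw [← h1]; exact hv.apply_eq_smul.symm
    have hfrR : f r ∈ R := hfR r hr
    have hkzero : k = 0 := by
      have h2 : μ • k = f r - μ • r := by
        rw [← hμv, ← hkr, smul_add]; abel
      have h3 : μ • k ∈ R := h2 ▸ Submodule.sub_mem R hfrR (Submodule.smul_mem R μ hr)
      have h4 : μ • k = 0 :=
        Submodule.disjoint_def.mp hdisj _ (Submodule.smul_mem K μ hk) h3
      rcases smul_eq_zero.mp h4 with h | h
      · exact absurd h hμ0
      · exact h
    have hvr : v = r := by rw [← hkr, hkzero, zero_add]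
    have hvR : v ∈ R := hvr ▸ hr
    have hfv : f v = μ • v := by rw [hvr] at hμv ⊢; rw [← hμv]
    have hμ1 : μ ≠ 1 := by
      rintro rfl
      have hvK : v ∈ K := by
        have : (f - 1) v = 0 := by
          rw [LinearMap.sub_apply, Module.End.one_apply, hfv, one_smul, sub_self]
        exact this
      exact hv.2 (Submodule.disjoint_def.mp hdisj v hvK hvR)
    have heig : Module.End.HasEigenvalue f μ :=
      Module.End.hasEigenvalue_of_hasEigenvector
        ⟨Module.End.mem_eigenspace_iff.mpr hfv, hv.2⟩
    have hroot : (minpoly ℂ f).IsRoot μ := Module.End.hasEigenvalue_iff_isRoot.mp heig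
    have hrootX : (minpoly ℂ X).IsRoot μ := by
      rwa [hf, minpoly.algEquiv_eq] at hroot
    have hcp : X.charpoly.IsRoot μ := hrootX.dvd (X.minpoly_dvd_charpoly)
    have habs := hspec μ hcp hμ1
    rw [← NNReal.coe_lt_coe]
    simpa [coe_nnnorm] using habs
  have hrad : spectralRadius ℂ S < 1 := by
    have := spectrum.spectralRadius_lt_of_forall_lt S hspecS
    simpa using this
  have hS0 := pow_tendsto_zero hrad
  refine ⟨Pm, ?_⟩
  have h1 : Tendsto (fun k : ℕ => Pm + S ^ (k + 1)) atTop (𝓝 (Pm + 0)) :=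
    tendsto_const_nhds.add (hS0.comp (tendsto_add_atTop_nat 1))
  rw [add_zero] at h1
  have h2 : Tendsto (fun k : ℕ => X ^ (k + 1)) atTop (𝓝 Pm) :=
    h1.congr fun k => (hpow k).symm
  exact (tendsto_add_atTop_iff_nat 1).mp h2

end SameLimitAux

/-- **Lemmas 24–25 (L12e–L13e) of the FLUE paper.**
If two complex `N×N` matrices each have a semisimple eigenvalue `1`
(`ker (X-I)² = ker (X-I)`) with all other eigenvalues strictly inside the unit
disc, and they share the same right fixed space and the same left fixed space,
then the entrywise limits of their powers both exist and coincide. -/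
theorem same_limit_of_matrix_powers
    (N : ℕ) (M₁ M₂ : Matrix (Fin N) (Fin N) ℂ)
    (hker₁ : ∀ v : Fin N → ℂ,
      (M₁ - 1).mulVec ((M₁ - 1).mulVec v) = 0 ↔ (M₁ - 1).mulVec v = 0)
    (hspec₁ : ∀ μ : ℂ, M₁.charpoly.IsRoot μ → μ ≠ 1 → ‖μ‖ < 1)
    (hker₂ : ∀ v : Fin N → ℂ,
      (M₂ - 1).mulVec ((M₂ - 1).mulVec v) = 0 ↔ (M₂ - 1).mulVec v = 0)
    (hspec₂ : ∀ μ : ℂ, M₂.charpoly.IsRoot μ → μ ≠ 1 → ‖μ‖ < 1)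
    (hright : {v : Fin N → ℂ | M₁.mulVec v = v} = {v : Fin N → ℂ | M₂.mulVec v = v})
    (hleft : {v : Fin N → ℂ | Matrix.vecMul v M₁ = v}
      = {v : Fin N → ℂ | Matrix.vecMul v M₂ = v}) :
    ∃ P : Matrix (Fin N) (Fin N) ℂ,
      (∀ i j, Filter.Tendsto (fun k : ℕ => (M₁ ^ k) i j) Filter.atTop (nhds (P i j))) ∧
      (∀ i j, Filter.Tendsto (fun k : ℕ => (M₂ ^ k) i j) Filter.atTop (nhds (P i j))) := by
  letI := (Matrix.linftyOpNormedRing : NormedRing (Matrix (Fin N) (Fin N) ℂ))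
  letI := (Matrix.linftyOpNormedAlgebra : NormedAlgebra ℂ (Matrix (Fin N) (Fin N) ℂ))
  obtain ⟨P₁, h₁⟩ := SameLimitAux.exists_pow_tendsto M₁ hker₁ hspec₁
  obtain ⟨P₂, h₂⟩ := SameLimitAux.exists_pow_tendsto M₂ hker₂ hspec₂
  -- M₂ * P₂ = P₂
  have hM₂P₂ : M₂ * P₂ = P₂ := by
    have ha : Filter.Tendsto (fun k : ℕ => M₂ * M₂ ^ k) Filter.atTop (nhds (M₂ * P₂)) :=
      h₂.const_mul M₂
    have hb : Filter.Tendsto (fun k : ℕ => M₂ * M₂ ^ k) Filter.atTop (nhds P₂) := by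
      have := (Filter.tendsto_add_atTop_iff_nat 1).mpr h₂
      refine this.congr fun k => ?_
      rw [pow_succ']
    exact tendsto_nhds_unique ha hb
  have hP₁M₁ : P₁ * M₁ = P₁ := by
    have ha : Filter.Tendsto (fun k : ℕ => M₁ ^ k * M₁) Filter.atTop (nhds (P₁ * M₁)) :=
      h₁.mul_const M₁
    have hb : Filter.Tendsto (fun k : ℕ => M₁ ^ k * M₁) Filter.atTop (nhds P₁) := by
      have := (Filter.tendsto_add_atTop_iff_nat 1).mpr h₁
      refine this.congr fun k => ?_
      rw [pow_succ]
    exact tendsto_nhds_unique ha hb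
  -- columns of P₂ are fixed by M₁
  have hM₁P₂ : M₁ * P₂ = P₂ := by
    ext i j
    have hcol : M₂.mulVec (fun l => P₂ l j) = fun l => P₂ l j := by
      funext i'
      have := congrFun (congrFun hM₂P₂ i') j
      simpa [Matrix.mul_apply, Matrix.mulVec, dotProduct] using this
    have hcol' : M₁.mulVec (fun l => P₂ l j) = fun l => P₂ l j :=
      (Set.ext_iff.mp hright (fun l => P₂ l j)).mpr hcol
    have := congrFun hcol' i
    simpa [Matrix.mul_apply, Matrix.mulVec, dotProduct] using this
  -- rows of P₁ are left-fixed by M₂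
  have hP₁M₂ : P₁ * M₂ = P₁ := by
    ext i j
    have hrow : Matrix.vecMul (fun l => P₁ i l) M₁ = fun l => P₁ i l := by
      funext j'
      have := congrFun (congrFun hP₁M₁ i) j'
      simpa [Matrix.mul_apply, Matrix.vecMul, dotProduct] using this
    have hrow' : Matrix.vecMul (fun l => P₁ i l) M₂ = fun l => P₁ i l :=
      (Set.ext_iff.mp hleft (fun l => P₁ i l)).mp hrow
    have := congrFun hrow' j
    simpa [Matrix.mul_apply, Matrix.vecMul, dotProduct] using this
  -- P₁ * P₂ = P₂
  have key1 : P₁ * P₂ = P₂ := by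
    have hk : ∀ k : ℕ, M₁ ^ k * P₂ = P₂ := by
      intro k
      induction k with
      | zero => simp
      | succ k ih => rw [pow_succ', mul_assoc, ih, hM₁P₂]
    have ha : Filter.Tendsto (fun k : ℕ => M₁ ^ k * P₂) Filter.atTop (nhds (P₁ * P₂)) :=
      h₁.mul_const P₂
    have hb : Filter.Tendsto (fun k : ℕ => M₁ ^ k * P₂) Filter.atTop (nhds P₂) := by
      have : (fun k : ℕ => M₁ ^ k * P₂) = fun _ => P₂ := funext hk
      rw [this]; exact tendsto_const_nhds
    exact tendsto_nhds_unique ha hb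
  -- P₁ * P₂ = P₁
  have key2 : P₁ * P₂ = P₁ := by
    have hk : ∀ k : ℕ, P₁ * M₂ ^ k = P₁ := by
      intro k
      induction k with
      | zero => simp
      | succ k ih => rw [pow_succ, ← mul_assoc, ih, hP₁M₂]
    have ha : Filter.Tendsto (fun k : ℕ => P₁ * M₂ ^ k) Filter.atTop (nhds (P₁ * P₂)) :=
      h₂.const_mul P₁
    have hb : Filter.Tendsto (fun k : ℕ => P₁ * M₂ ^ k) Filter.atTop (nhds P₁) := by
      have : (fun k : ℕ => P₁ * M₂ ^ k) = fun _ => P₁ := funext hk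
      rw [this]; exact tendsto_const_nhds
    exact tendsto_nhds_unique ha hb
  have hPP : P₁ = P₂ := by rw [← key2, key1]
  exact ⟨P₁, fun i j => SameLimitAux.tendsto_entry h₁ i j,
    fun i j => hPP ▸ SameLimitAux.tendsto_entry h₂ i j⟩
end

section
/- Let n be a positive integer. Let A be an n×n row-stochastic real matrix such that 1 is a root of multiplicity one of the characteristic polynomial of A. Let D be an n×n column-stochastic real matrix such that 1 is a root of multiplicity two of the characteristic polynomial of D and the fixed space {w ∈ ℝ^n : D·w = w} has dimension 2. Let Q be the 2n×2n block matrix Q = [[A, 0], [I − A, D]]. Then: 1 is a root of multiplicity three of the characteristic polynomial of Q; the fixed space {v ∈ ℝ^{2n} : Q·v = v} has dimension 3 (so the eigenvalue 1 of Q is semisimple); every complex root μ of the characteristic polynomial of Q satisfies |μ| ≤ 1; and the spectral radius of Q equals 1. -/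
open Polynomial Matrix Module

section Aux

lemma my_eval_charpoly {K : Type*} [Field K] {m : Type*} [Fintype m] [DecidableEq m]
    (M : Matrix m m K) (r : K) : M.charpoly.eval r = (r • (1 : Matrix m m K) - M).det := by
  rw [Matrix.charpoly, eval_det, matPolyEquiv_charmatrix]
  simp [Matrix.scalar, Matrix.smul_one_eq_diagonal]
  rfl

lemma my_isRoot_charpoly_iff {K : Type*} [Field K] {m : Type*} [Fintype m] [DecidableEq m]
    (M : Matrix m m K) (μ : K) :
    M.charpoly.IsRoot μ ↔ ∃ v : m → K, v ≠ 0 ∧ M.mulVec v = μ • v := by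
  rw [Polynomial.IsRoot, my_eval_charpoly, ← Matrix.exists_mulVec_eq_zero_iff]
  constructor
  · rintro ⟨v, hv, h⟩
    refine ⟨v, hv, ?_⟩
    rw [Matrix.sub_mulVec, Matrix.smul_mulVec, Matrix.one_mulVec, sub_eq_zero] at h
    exact h.symm ▸ rfl
  · rintro ⟨v, hv, h⟩
    refine ⟨v, hv, ?_⟩
    rw [Matrix.sub_mulVec, Matrix.smul_mulVec, Matrix.one_mulVec, h, sub_self]

lemma my_hasEigen_iff {K : Type*} [Field K] {m : Type*} [Fintype m] [DecidableEq m]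
    (M : Matrix m m K) (μ : K) :
    Module.End.HasEigenvalue (Matrix.toLin' M) μ ↔ M.charpoly.IsRoot μ := by
  rw [my_isRoot_charpoly_iff, Module.End.hasEigenvalue_iff, Submodule.ne_bot_iff]
  constructor
  · rintro ⟨v, hv, hv0⟩
    exact ⟨v, hv0, by simpa [Matrix.toLin'_apply] using Module.End.mem_eigenspace_iff.mp hv⟩
  · rintro ⟨v, hv0, hv⟩
    exact ⟨v, Module.End.mem_eigenspace_iff.mpr (by simpa [Matrix.toLin'_apply] using hv), hv0⟩

lemma stoch_bound {m : ℕ} (M : Matrix (Fin m) (Fin m) ℝ)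
    (hnn : ∀ i j, 0 ≤ M i j) (hrow : ∀ i, ∑ j, M i j = 1)
    (μ : ℂ) (h : ((M.map Complex.ofReal).charpoly).IsRoot μ) : ‖μ‖ ≤ 1 := by
  have heig : Module.End.HasEigenvalue (Matrix.toLin' (M.map Complex.ofReal)) μ :=
    (my_hasEigen_iff _ μ).mpr h
  obtain ⟨k, hk⟩ := eigenvalue_mem_ball heig
  rw [Metric.mem_closedBall] at hk
  have h1 : ∀ j, ‖(M.map Complex.ofReal) k j‖ = M k j := fun j => by
    simp [Matrix.map_apply, Complex.norm_real, abs_of_nonneg (hnn k j)]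
  calc ‖μ‖ = ‖μ‖ := rfl
    _ ≤ ‖μ - (M.map Complex.ofReal) k k‖ + ‖(M.map Complex.ofReal) k k‖ := by simpa using norm_add_le (μ - (M.map Complex.ofReal) k k) ((M.map Complex.ofReal) k k)
    _ ≤ (∑ j ∈ Finset.univ.erase k, ‖(M.map Complex.ofReal) k j‖) + M k k := by
        rw [h1 k]
        exact add_le_add (by simpa [dist_eq_norm] using hk) le_rfl
    _ = (∑ j ∈ Finset.univ.erase k, M k j) + M k k := by simp_rw [h1]
    _ = ∑ j, M k j := by rw [Finset.sum_erase_add _ _ (Finset.mem_univ k)]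
    _ = 1 := hrow k


lemma my_charpoly_one {K : Type*} [Field K] {m : Type*} [Fintype m] [DecidableEq m] :
    (1 : Matrix m m K).charpoly = (X - C 1) ^ Fintype.card m := by
  have : charmatrix (1 : Matrix m m K) = Matrix.diagonal (fun _ => (X : K[X]) - C 1) := by
    ext i j
    by_cases h : i = j
    · subst h; simp [charmatrix_apply]
    · simp [charmatrix_apply_ne _ _ _ h, Matrix.diagonal_apply_ne _ h, Matrix.one_apply_ne h]
  rw [Matrix.charpoly, this, Matrix.det_diagonal, Finset.prod_const, Finset.card_univ]

lemma geo_le_alg {K : Type*} [Field K] {m : Type*} [Fintype m] [DecidableEq m]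
    (M : Matrix m m K) :
    Module.finrank K (LinearMap.ker (Matrix.toLin' (M - 1))) ≤
      Polynomial.rootMultiplicity 1 M.charpoly := by
  classical
  set W := LinearMap.ker (Matrix.toLin' (M - 1)) with hW
  obtain ⟨W', hcompl⟩ := Submodule.exists_isCompl W
  set f := Matrix.toLin' M with hf
  have hWf : ∀ w : (m → K), w ∈ W → f w = w := by
    intro w hw
    have := LinearMap.mem_ker.mp hw
    rw [map_sub, Matrix.toLin'_one] at this
    have := sub_eq_zero.mp (by simpa using this)
    simpa [hf] using this
  set k := Module.finrank K W
  set r := Module.finrank K W'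
  let bW : Basis (Fin k) K W := Module.finBasis K W
  let bW' : Basis (Fin r) K W' := Module.finBasis K W'
  let e := Submodule.prodEquivOfIsCompl W W' hcompl
  let b : Basis (Fin k ⊕ Fin r) K (m → K) := (bW.prod bW').map e
  let Mm := LinearMap.toMatrix b b f
  have hcp : Mm.charpoly = M.charpoly := by
    rw [LinearMap.charpoly_toMatrix]
    conv_rhs => rw [show M = LinearMap.toMatrix' f by simp [hf, LinearMap.toMatrix'_toLin']]
    rw [← LinearMap.toMatrix_eq_toMatrix']
    exact (LinearMap.charpoly_toMatrix _ _).symm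
  have hbinl : ∀ j : Fin k, b (Sum.inl j) = (bW j : m → K) := by
    intro j
    simp [b, e, Basis.prod_apply, Submodule.coe_prodEquivOfIsCompl']
  have hcol : ∀ (i : Fin k ⊕ Fin r) (j : Fin k), Mm i (Sum.inl j) = (1 : Matrix (Fin k ⊕ Fin r) (Fin k ⊕ Fin r) K) i (Sum.inl j) := by
    intro i j
    rw [show Mm i (Sum.inl j) = b.repr (f (b (Sum.inl j))) i from LinearMap.toMatrix_apply b b f _ _]
    rw [hbinl j, hWf _ (bW j).2, ← hbinl j, b.repr_self]
    simp [Matrix.one_apply, Finsupp.single_apply, eq_comm]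
  have h11 : Mm.toBlocks₁₁ = 1 := by
    ext i j
    have := hcol (Sum.inl i) j
    simpa [Matrix.toBlocks₁₁, Matrix.one_apply, Sum.inl.injEq] using this
  have h21 : Mm.toBlocks₂₁ = 0 := by
    ext i j
    have := hcol (Sum.inr i) j
    simpa [Matrix.toBlocks₂₁, Matrix.one_apply] using this
  have hblocks : Mm = Matrix.fromBlocks 1 (Mm.toBlocks₁₂) 0 (Mm.toBlocks₂₂) := by
    conv_lhs => rw [← Matrix.fromBlocks_toBlocks Mm]
    rw [h11, h21]
  have hdvd : (X - C (1:K)) ^ k ∣ M.charpoly := by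
    rw [← hcp, hblocks, Matrix.charpoly_fromBlocks_zero₂₁, my_charpoly_one]
    simp only [Fintype.card_fin]
    exact Dvd.intro _ rfl
  exact (Polynomial.le_rootMultiplicity_iff (Matrix.charpoly_monic M).ne_zero).mpr hdvd


variable {n : ℕ}

lemma block_sub_one (A D : Matrix (Fin n) (Fin n) ℝ) :
    (Matrix.fromBlocks A 0 (1 - A) D) - 1 =
      Matrix.fromBlocks (A - 1) 0 (1 - A) (D - 1) := by
  rw [← Matrix.fromBlocks_one]
  ext (i|i) (j|j) <;> simp [Matrix.fromBlocks]

lemma block_ker_iff (A D : Matrix (Fin n) (Fin n) ℝ) (v : Fin n ⊕ Fin n → ℝ) :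
    v ∈ LinearMap.ker (Matrix.toLin' ((Matrix.fromBlocks A 0 (1 - A) D) - 1)) ↔
      (v ∘ Sum.inl) ∈ LinearMap.ker (Matrix.toLin' (A - 1)) ∧
      (v ∘ Sum.inr) ∈ LinearMap.ker (Matrix.toLin' (D - 1)) := by
  simp only [LinearMap.mem_ker, Matrix.toLin'_apply, block_sub_one,
    Matrix.fromBlocks_mulVec, Matrix.zero_mulVec, add_zero]
  constructor
  · intro h
    have h1 : (A - 1) *ᵥ (v ∘ Sum.inl) = 0 := funext fun i => congrFun h (Sum.inl i)
    have h2 : (1 - A) *ᵥ (v ∘ Sum.inl) + (D - 1) *ᵥ (v ∘ Sum.inr) = 0 :=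
      funext fun i => congrFun h (Sum.inr i)
    refine ⟨h1, ?_⟩
    rwa [show (1 - A) = -(A - 1) by simp, Matrix.neg_mulVec, h1, neg_zero, zero_add] at h2
  · rintro ⟨h1, h2⟩
    rw [show (1 - A) = -(A - 1) by simp, Matrix.neg_mulVec, h1, neg_zero, zero_add, h2]
    ext (i|i) <;> rfl

set_option maxHeartbeats 1000000 in
lemma block_ker_finrank (A D : Matrix (Fin n) (Fin n) ℝ) :
    Module.finrank ℝ (LinearMap.ker (Matrix.toLin' ((Matrix.fromBlocks A 0 (1 - A) D) - 1))) =
      Module.finrank ℝ (LinearMap.ker (Matrix.toLin' (A - 1))) +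
      Module.finrank ℝ (LinearMap.ker (Matrix.toLin' (D - 1))) := by
  let e : (LinearMap.ker (Matrix.toLin' ((Matrix.fromBlocks A 0 (1 - A) D) - 1))) ≃ₗ[ℝ]
      (LinearMap.ker (Matrix.toLin' (A - 1))) × (LinearMap.ker (Matrix.toLin' (D - 1))) :=
    { toFun := fun v => (⟨v.1 ∘ Sum.inl, ((block_ker_iff A D v.1).mp v.2).1⟩,
        ⟨v.1 ∘ Sum.inr, ((block_ker_iff A D v.1).mp v.2).2⟩)
      invFun := fun p => ⟨Sum.elim p.1.1 p.2.1, (block_ker_iff A D _).mpr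
        ⟨by rw [Sum.elim_comp_inl]; exact p.1.2, by rw [Sum.elim_comp_inr]; exact p.2.2⟩⟩
      map_add' := fun u v => by
        refine Prod.ext (Subtype.ext ?_) (Subtype.ext ?_) <;> rfl
      map_smul' := fun c v => by
        refine Prod.ext (Subtype.ext ?_) (Subtype.ext ?_) <;> rfl
      left_inv := fun v => by
        apply Subtype.ext
        funext i
        cases i <;> rfl
      right_inv := fun p => by
        refine Prod.ext (Subtype.ext ?_) (Subtype.ext ?_) <;> rfl }
  rw [e.finrank_eq, Module.finrank_prod]

end Aux

lemma my_charpoly_transpose {R : Type*} [CommRing R] {m : Type*} [Fintype m] [DecidableEq m]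
    (M : Matrix m m R) : Mᵀ.charpoly = M.charpoly := by
  have h : charmatrix (Mᵀ) = (charmatrix M)ᵀ := by
    ext i j
    by_cases h : i = j
    · subst h; simp [charmatrix_apply]
    · simp [charmatrix_apply_ne _ _ _ h, charmatrix_apply_ne _ _ _ (Ne.symm h),
        Matrix.transpose_apply]
  rw [Matrix.charpoly, h, Matrix.det_transpose, Matrix.charpoly]

lemma my_mem_spectrum_iff {m : Type*} [Fintype m] [DecidableEq m]
    (M : Matrix m m ℂ) (μ : ℂ) : μ ∈ spectrum ℂ M ↔ M.charpoly.IsRoot μ := by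
  rw [← AlgEquiv.spectrum_eq (Matrix.toLinAlgEquiv (Pi.basisFun ℂ m)) M,
    ← Module.End.hasEigenvalue_iff_mem_spectrum]
  have h : (Matrix.toLinAlgEquiv (Pi.basisFun ℂ m)) M = Matrix.toLin' M := by
    rw [← Matrix.toLin_eq_toLin']; rfl
  rw [h, my_hasEigen_iff]

/-- **Proposition 1 of the FLUE paper.**
Let `A` be an `n×n` row-stochastic matrix for which `1` is a simple root of the
characteristic polynomial, and `D` an `n×n` column-stochastic matrix for which
`1` is a root of multiplicity two of the characteristic polynomial and whose
fixed space is two-dimensional.  Then for the block matrix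
`Q = [[A, 0], [I - A, D]]`: `1` is a root of multiplicity three of the
characteristic polynomial of `Q`, the fixed space of `Q` is three-dimensional
(so the eigenvalue `1` is semisimple), every complex eigenvalue of `Q` has
modulus at most `1`, and the spectral radius of `Q` equals `1`. -/
theorem flue_proposition1
    (n : ℕ) (hn : 0 < n)
    (A : Matrix (Fin n) (Fin n) ℝ)
    (hA_nonneg : ∀ i j, 0 ≤ A i j)
    (hA_rows : ∀ i, ∑ j, A i j = 1)
    (hA_mult : Polynomial.rootMultiplicity 1 A.charpoly = 1)
    (D : Matrix (Fin n) (Fin n) ℝ)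
    (hD_nonneg : ∀ i j, 0 ≤ D i j)
    (hD_cols : ∀ j, ∑ i, D i j = 1)
    (hD_mult : Polynomial.rootMultiplicity 1 D.charpoly = 2)
    (hD_dim : Module.finrank ℝ (LinearMap.ker (Matrix.toLin' (D - 1))) = 2)
    (Q : Matrix (Fin n ⊕ Fin n) (Fin n ⊕ Fin n) ℝ)
    (hQ : Q = Matrix.fromBlocks A 0 (1 - A) D) :
    Polynomial.rootMultiplicity 1 Q.charpoly = 3 ∧
    Module.finrank ℝ (LinearMap.ker (Matrix.toLin' (Q - 1))) = 3 ∧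
    (∀ μ : ℂ, ((Q.map Complex.ofReal).charpoly).IsRoot μ → ‖μ‖ ≤ 1) ∧
    spectralRadius ℂ (Q.map Complex.ofReal) = 1 := by
  have hAne : A.charpoly ≠ 0 := (Matrix.charpoly_monic A).ne_zero
  have hDne : D.charpoly ≠ 0 := (Matrix.charpoly_monic D).ne_zero
  -- characteristic polynomial of Q
  have hQcp : Q.charpoly = A.charpoly * D.charpoly := by
    rw [hQ, Matrix.charpoly_fromBlocks_zero₁₂]
  -- part 1
  have part1 : Polynomial.rootMultiplicity 1 Q.charpoly = 3 := by
    rw [hQcp, Polynomial.rootMultiplicity_mul (mul_ne_zero hAne hDne), hA_mult, hD_mult]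
  -- dimension of the fixed space of A
  have hA_dim : Module.finrank ℝ (LinearMap.ker (Matrix.toLin' (A - 1))) = 1 := by
    refine le_antisymm (hA_mult ▸ geo_le_alg A) ?_
    have hroot : A.charpoly.IsRoot 1 :=
      (Polynomial.rootMultiplicity_pos hAne).mp (by rw [hA_mult]; norm_num)
    obtain ⟨v, hv0, hv⟩ := (my_isRoot_charpoly_iff A 1).mp hroot
    have hvmem : v ∈ LinearMap.ker (Matrix.toLin' (A - 1)) := by
      rw [LinearMap.mem_ker, Matrix.toLin'_apply, Matrix.sub_mulVec, Matrix.one_mulVec, hv,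
        one_smul, sub_self]
    have : (0 : ℕ) < Module.finrank ℝ (LinearMap.ker (Matrix.toLin' (A - 1))) := by
      rw [Module.finrank_pos_iff_exists_ne_zero]
      exact ⟨⟨v, hvmem⟩, fun h => hv0 (congrArg Subtype.val h)⟩
    omega
  -- part 2
  have part2 : Module.finrank ℝ (LinearMap.ker (Matrix.toLin' (Q - 1))) = 3 := by
    rw [hQ, block_ker_finrank, hA_dim, hD_dim]
  -- part 3
  have hQmap : (Q.map Complex.ofReal).charpoly =
      (A.map Complex.ofReal).charpoly * (D.map Complex.ofReal).charpoly := by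
    rw [hQ, show (Matrix.fromBlocks A 0 (1 - A) D).map Complex.ofReal =
        Matrix.fromBlocks (A.map Complex.ofReal) 0 ((1 - A).map Complex.ofReal)
          (D.map Complex.ofReal) by
      rw [Matrix.fromBlocks_map, Matrix.map_zero _ Complex.ofReal_zero],
      Matrix.charpoly_fromBlocks_zero₁₂]
  have part3 : ∀ μ : ℂ, ((Q.map Complex.ofReal).charpoly).IsRoot μ → ‖μ‖ ≤ 1 := by
    intro μ hμ
    rw [Polynomial.IsRoot, hQmap, Polynomial.eval_mul, mul_eq_zero] at hμ
    rcases hμ with hμ | hμ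
    · exact stoch_bound A hA_nonneg hA_rows μ hμ
    · refine stoch_bound Dᵀ (fun i j => hD_nonneg j i) (fun i => hD_cols i) μ ?_
      rwa [Polynomial.IsRoot, show (Dᵀ).map Complex.ofReal = (D.map Complex.ofReal)ᵀ from
        Matrix.transpose_map, my_charpoly_transpose]
  refine ⟨part1, part2, part3, ?_⟩
  -- part 4
  have h1root : ((Q.map Complex.ofReal).charpoly).IsRoot 1 := by
    have : Q.charpoly.IsRoot 1 :=
      (Polynomial.rootMultiplicity_pos (Matrix.charpoly_monic Q).ne_zero).mp
        (by rw [part1]; norm_num)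
    rw [show Q.map Complex.ofReal = Q.map ⇑Complex.ofRealHom from rfl,
      Matrix.charpoly_map]
    simpa using this.map (f := Complex.ofRealHom)
  have h1mem : (1 : ℂ) ∈ spectrum ℂ (Q.map Complex.ofReal) :=
    (my_mem_spectrum_iff _ 1).mpr h1root
  rw [spectralRadius]
  refine le_antisymm (iSup₂_le fun k hk => ?_) ?_
  · have hk1 : ‖k‖ ≤ 1 := part3 k ((my_mem_spectrum_iff _ k).mp hk)
    have : ‖k‖₊ ≤ 1 := by
      exact_mod_cast hk1
    exact_mod_cast this
  · have := le_iSup₂ (f := fun (k : ℂ) (_ : k ∈ spectrum ℂ (Q.map Complex.ofReal)) =>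
      (‖k‖₊ : ENNReal)) 1 h1mem
    simpa using this
end

section
/- Let n be a positive integer, let A be an n×n row-stochastic real matrix, let D be an n×n column-stochastic real matrix, let ε ∈ ℝ, set T = I − D, and define the 2n×2n real matrix Q_ε = [[A, ε·T], [I − A, D − ε·T]]. Then: (i) Q_ε·(1, 0) = (1, 0); (ii) for every w ∈ ℝ^n with D·w = w one has Q_ε·(0, w) = (0, w); (iii) for every c ≠ 0 there is no vector u ∈ ℝ^{2n} with (Q_ε − I)·u = (c·1, 0); and (iv) for every w ∈ ℝ^n with D·w = w and Σ_i w_i ≠ 0 there is no vector u ∈ ℝ^{2n} with (Q_ε − I)·u = (0, w). -/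
/-- **Lemma 20 (L9n) of the FLUE paper.**
With `A` row stochastic, `D` column stochastic, `T = I - D`, and the perturbed
block matrix `Q_ε = [[A, ε·T], [I - A, D - ε·T]]`:
(i) `(1, 0)` is fixed by `Q_ε`;
(ii) `(0, w)` is fixed by `Q_ε` for every fixed vector `w` of `D`;
(iii) for `c ≠ 0` no vector `u` satisfies `(Q_ε - I)·u = (c·1, 0)`; and
(iv) for every fixed vector `w` of `D` with nonzero coordinate sum, no vector
`u` satisfies `(Q_ε - I)·u = (0, w)`.  In particular there are no generalized
eigenvectors of order two above these eigenvectors of eigenvalue `1`. -/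
theorem flue_lemma_L9n
    (n : ℕ) (hn : 0 < n)
    (A : Matrix (Fin n) (Fin n) ℝ)
    (hA_nonneg : ∀ i j, 0 ≤ A i j)
    (hA_rows : ∀ i, ∑ j, A i j = 1)
    (D : Matrix (Fin n) (Fin n) ℝ)
    (hD_nonneg : ∀ i j, 0 ≤ D i j)
    (hD_cols : ∀ j, ∑ i, D i j = 1)
    (ε : ℝ)
    (T : Matrix (Fin n) (Fin n) ℝ) (hT : T = 1 - D)
    (Qε : Matrix (Fin n ⊕ Fin n) (Fin n ⊕ Fin n) ℝ)
    (hQε : Qε = Matrix.fromBlocks A (ε • T) (1 - A) (D - ε • T)) :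
    (Qε.mulVec (Sum.elim (fun _ => (1 : ℝ)) (0 : Fin n → ℝ)) = Sum.elim (fun _ => (1 : ℝ)) (0 : Fin n → ℝ)) ∧
    (∀ w : Fin n → ℝ, D.mulVec w = w →
      Qε.mulVec (Sum.elim (0 : Fin n → ℝ) w) = Sum.elim (0 : Fin n → ℝ) w) ∧
    (∀ c : ℝ, c ≠ 0 →
      ¬∃ u : Fin n ⊕ Fin n → ℝ, (Qε - 1).mulVec u = Sum.elim (fun _ => c) (0 : Fin n → ℝ)) ∧
    (∀ w : Fin n → ℝ, D.mulVec w = w → (∑ i, w i) ≠ 0 →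
      ¬∃ u : Fin n ⊕ Fin n → ℝ, (Qε - 1).mulVec u = Sum.elim (0 : Fin n → ℝ) w) := by
  subst hT hQε
  -- column sums of Qε are all 1
  have hcol : ∀ j : Fin n ⊕ Fin n,
      ∑ k : Fin n ⊕ Fin n,
        (Matrix.fromBlocks A (ε • ((1:Matrix (Fin n) (Fin n) ℝ) - D)) (1 - A)
          (D - ε • ((1:Matrix (Fin n) (Fin n) ℝ) - D))) k j = 1 := by
    intro j
    cases j with
    | inl j =>
        rw [Fintype.sum_sum_type]
        simp only [Matrix.fromBlocks_apply₁₁, Matrix.fromBlocks_apply₂₁,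
          Matrix.sub_apply]
        rw [Finset.sum_sub_distrib]
        have h1 : ∑ i : Fin n, (1 : Matrix (Fin n) (Fin n) ℝ) i j = 1 := by
          simp [Matrix.one_apply]
        ring_nf
        rw [h1]
    | inr j =>
        rw [Fintype.sum_sum_type]
        simp only [Matrix.fromBlocks_apply₁₂, Matrix.fromBlocks_apply₂₂,
          Matrix.sub_apply]
        rw [Finset.sum_sub_distrib]
        have := hD_cols j
        ring_nf
        rw [this]
  -- hence the total coordinate sum of (Qε - 1).mulVec u is 0
  have key : ∀ u : Fin n ⊕ Fin n → ℝ,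
      ∑ k : Fin n ⊕ Fin n,
        ((Matrix.fromBlocks A (ε • ((1:Matrix (Fin n) (Fin n) ℝ) - D)) (1 - A)
          (D - ε • ((1:Matrix (Fin n) (Fin n) ℝ) - D)) - 1).mulVec u) k = 0 := by
    intro u
    have hone : ∀ j : Fin n ⊕ Fin n,
        ∑ k : Fin n ⊕ Fin n, (1 : Matrix (Fin n ⊕ Fin n) (Fin n ⊕ Fin n) ℝ) k j = 1 := by
      intro j; simp [Matrix.one_apply]
    calc ∑ k : Fin n ⊕ Fin n,
        ((Matrix.fromBlocks A (ε • ((1:Matrix (Fin n) (Fin n) ℝ) - D)) (1 - A)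
          (D - ε • ((1:Matrix (Fin n) (Fin n) ℝ) - D)) - 1).mulVec u) k
        = ∑ j : Fin n ⊕ Fin n, (∑ k : Fin n ⊕ Fin n,
            (Matrix.fromBlocks A (ε • ((1:Matrix (Fin n) (Fin n) ℝ) - D)) (1 - A)
              (D - ε • ((1:Matrix (Fin n) (Fin n) ℝ) - D)) - 1) k j) * u j := by
          simp only [Matrix.mulVec, dotProduct, Finset.sum_mul]
          exact Finset.sum_comm
      _ = 0 := by
          apply Finset.sum_eq_zero
          intro j _
          have : ∑ k : Fin n ⊕ Fin n,
              (Matrix.fromBlocks A (ε • ((1:Matrix (Fin n) (Fin n) ℝ) - D)) (1 - A)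
                (D - ε • ((1:Matrix (Fin n) (Fin n) ℝ) - D)) - 1) k j = 0 := by
            simp only [Matrix.sub_apply, Finset.sum_sub_distrib, hcol j, hone j, sub_self]
          rw [this, zero_mul]
  refine ⟨?_, ?_, ?_, ?_⟩
  · rw [Matrix.fromBlocks_mulVec]
    ext k
    cases k with
    | inl k => simp [Matrix.mulVec, dotProduct, hA_rows]
    | inr k =>
        simp only [Matrix.mulVec_zero, add_zero, Sum.elim_inr, Matrix.sub_mulVec,
          Sum.elim_inl, Pi.sub_apply, Pi.zero_apply]
        simp [Matrix.mulVec, dotProduct, hA_rows, Matrix.one_apply]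
  · intro w hw
    rw [Matrix.fromBlocks_mulVec]
    ext k
    cases k with
    | inl k =>
        simp [Sum.elim_comp_inl, Sum.elim_comp_inr, Matrix.mulVec_zero,
          Matrix.smul_mulVec, Matrix.sub_mulVec, Matrix.one_mulVec, hw]
    | inr k =>
        simp [Sum.elim_comp_inl, Sum.elim_comp_inr, Matrix.mulVec_zero,
          Matrix.smul_mulVec, Matrix.sub_mulVec, Matrix.one_mulVec, hw]
  · intro c hc ⟨u, hu⟩
    have h0 := key u
    rw [hu, Fintype.sum_sum_type] at h0
    simp only [Sum.elim_inl, Sum.elim_inr, Pi.zero_apply, Finset.sum_const,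
      Finset.card_univ, Fintype.card_fin, nsmul_eq_mul, mul_zero, add_zero] at h0
    have hn' : (n : ℝ) ≠ 0 := Nat.cast_ne_zero.mpr hn.ne'
    rcases mul_eq_zero.mp h0 with h | h
    · exact hn' h
    · exact hc h
  · intro w hw hws ⟨u, hu⟩
    have h0 := key u
    rw [hu, Fintype.sum_sum_type] at h0
    simp only [Sum.elim_inl, Sum.elim_inr, Pi.zero_apply, Finset.sum_const_zero,
      zero_add] at h0
    exact hws h0
end

section
/- Adopt the ITERATION SETTING. Assume additionally that Σ_{k=0}^∞ α_k² < ∞, that m ≤ N, and that the first m rows of P coincide, i.e. P_{j,l} = P_{q,l} for all j, q ∈ {1,…,m} and all l. Then for all j, q ∈ {1,…,m}: (a) Σ_{k=0}^∞ α_k · ‖z_j(k) − z_q(k)‖ < ∞, and (b) lim_{k→∞} ‖z_j(k) − z_q(k)‖ = 0; that is, the first m components of the iterates reach consensus. -/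
open Filter Finset

/-- A nonnegative sequence satisfying `x (k+1) ≤ γ·x k + a k` with `γ < 1` and
`a → 0` tends to `0`. -/
private lemma flue_tendsto_rec (γ : ℝ) (hγ0 : 0 ≤ γ) (hγ1 : γ < 1) (x a : ℕ → ℝ)
    (hx0 : ∀ k, 0 ≤ x k) (hrec : ∀ k, x (k + 1) ≤ γ * x k + a k)
    (ha : Tendsto a atTop (nhds 0)) : Tendsto x atTop (nhds 0) := by
  rw [Metric.tendsto_atTop]
  intro ε hε
  have h1γ : 0 < 1 - γ := by linarith
  have hε' : 0 < (1 - γ) * ε / 2 := by positivity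
  obtain ⟨K, hK⟩ := (Metric.tendsto_atTop.1 ha) ((1 - γ) * ε / 2) hε'
  have hKa : ∀ k ≥ K, a k ≤ (1 - γ) * ε / 2 := by
    intro k hk
    have := hK k hk
    rw [Real.dist_eq, sub_zero] at this
    exact le_of_lt (lt_of_abs_lt this)
  have step : ∀ n : ℕ, x (K + n) ≤ γ ^ n * x K + ε / 2 := by
    intro n
    induction n with
    | zero =>
      simp only [Nat.add_zero, pow_zero, one_mul]
      linarith
    | succ n ih =>
      have h1 := hrec (K + n)
      have h2 := hKa (K + n) (Nat.le_add_right _ _)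
      have h3 : γ * x (K + n) ≤ γ * (γ ^ n * x K + ε / 2) :=
        mul_le_mul_of_nonneg_left ih hγ0
      have h3' : γ * (γ ^ n * x K + ε / 2) = γ ^ (n + 1) * x K + γ * ε / 2 := by ring
      show x (K + n + 1) ≤ γ ^ (n + 1) * x K + ε / 2
      rw [h3'] at h3
      linarith
  have hpow : Tendsto (fun n : ℕ => γ ^ n * x K) atTop (nhds 0) := by
    simpa using (tendsto_pow_atTop_nhds_zero_of_lt_one hγ0 hγ1).mul_const (x K)
  obtain ⟨N₁, hN₁⟩ := (Metric.tendsto_atTop.1 hpow) (ε / 2) (by linarith)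
  refine ⟨K + N₁, fun k hk => ?_⟩
  have hkn : k = K + (k - K) := by omega
  have hn1 : N₁ ≤ k - K := by omega
  have h4 := step (k - K)
  have h5 := hN₁ (k - K) hn1
  rw [Real.dist_eq, sub_zero] at h5 ⊢
  have h6 : γ ^ (k - K) * x K < ε / 2 := lt_of_abs_lt h5
  rw [abs_of_nonneg (hx0 k)]
  calc x k = x (K + (k - K)) := by rw [← hkn]
    _ ≤ γ ^ (k - K) * x K + ε / 2 := h4
    _ < ε / 2 + ε / 2 := by linarith
    _ = ε := by ring

private lemma flue_row_swap {N : ℕ} {E : Type*} [AddCommMonoid E] [Module ℝ E]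
    (c : Fin N → ℝ) (M : Fin N → Fin N → ℝ) (v : Fin N → E) :
    ∑ j' : Fin N, c j' • (∑ l, M j' l • v l) = ∑ l, (∑ j', c j' * M j' l) • v l := by
  simp_rw [Finset.smul_sum, smul_smul]
  rw [Finset.sum_comm]
  simp_rw [Finset.sum_smul]

private lemma flue_row_swap2 {N : ℕ} {E : Type*} [AddCommMonoid E] [Module ℝ E]
    (c : Fin N → ℝ) (K : ℕ) (β : ℕ → ℝ) (w : Fin N → ℕ → E) :
    ∑ j' : Fin N, c j' • (∑ s ∈ Finset.range K, β s • w j' s)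
      = ∑ s ∈ Finset.range K, β s • ∑ j' : Fin N, c j' • w j' s := by
  simp_rw [Finset.smul_sum]
  rw [Finset.sum_comm]
  refine Finset.sum_congr rfl fun s _ => ?_
  exact Finset.sum_congr rfl fun j' _ => smul_comm (c j') (β s) (w j' s)

/-- **Lemma 12 (parts (a) and (b)) of the FLUE paper.**
In the iteration setting (powers of the updating matrix `O` converge
geometrically to `P`, bounded "gradient" maps `g_i`, nonnegative step sizes
`α_k`, and the recursion `z_i(k+1) = Σ_j O_{ij}·z_j(k) − α_k·g_i(z_i(k))`),
if in addition `Σ α_k² < ∞` and the first `m` rows of `P` coincide, then for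
all indices `j, q` among the first `m`:
(a) `Σ_k α_k·‖z_j(k) − z_q(k)‖ < ∞`, and
(b) `‖z_j(k) − z_q(k)‖ → 0`; the first `m` components reach consensus. -/
theorem flue_lemma12_consensus
    (N : ℕ) (hN : 0 < N)
    (O P : Matrix (Fin N) (Fin N) ℝ)
    (Γ γ : ℝ) (hΓ : 0 < Γ) (hγ0 : 0 < γ) (hγ1 : γ < 1)
    (hOP : ∀ k : ℕ, 1 ≤ k → ∀ j l, |(O ^ k) j l - P j l| ≤ Γ * γ ^ k)
    (E : Type*) [NormedAddCommGroup E] [NormedSpace ℝ E]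
    (G : ℝ) (hG : 0 ≤ G)
    (g : Fin N → E → E) (hg : ∀ i x, ‖g i x‖ ≤ G)
    (α : ℕ → ℝ) (hα : ∀ k, 0 ≤ α k)
    (z : ℕ → Fin N → E)
    (hz : ∀ (k : ℕ) (i : Fin N),
      z (k + 1) i = (∑ j, O i j • z k j) - α k • g i (z k i))
    (hα2 : Summable fun k => (α k) ^ 2)
    (m : ℕ) (hm : m ≤ N)
    (hP : ∀ j q : Fin N, (j : ℕ) < m → (q : ℕ) < m → ∀ l, P j l = P q l) :
    ∀ j q : Fin N, (j : ℕ) < m → (q : ℕ) < m →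
      Summable (fun k => α k * ‖z k j - z k q‖) ∧
      Filter.Tendsto (fun k => ‖z k j - z k q‖) Filter.atTop (nhds 0) := by
  intro j q hj hq
  -- closed form of the iteration
  have hclosed : ∀ (k : ℕ) (i : Fin N),
      z k i = (∑ l, (O ^ k) i l • z 0 l)
        - ∑ s ∈ Finset.range k, α s • ∑ l, (O ^ (k - 1 - s)) i l • g l (z s l) := by
    intro k
    induction k with
    | zero => intro i; simp [Matrix.one_apply]
    | succ k ih =>
      intro i
      rw [hz k i]
      simp only [Nat.add_sub_cancel]
      rw [Finset.sum_range_succ]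
      have hlast : α k • ∑ l, (O ^ (k - k)) i l • g l (z k l) = α k • g i (z k i) := by
        simp [Matrix.one_apply]
      rw [hlast, sub_add_eq_sub_sub]
      congr 1
      calc ∑ j', O i j' • z k j'
          = ∑ j', O i j' • ((∑ l, (O ^ k) j' l • z 0 l)
              - ∑ s ∈ Finset.range k, α s • ∑ l, (O ^ (k - 1 - s)) j' l • g l (z s l)) :=
            Finset.sum_congr rfl (fun j' _ => by rw [← ih j'])
        _ = (∑ j', O i j' • ∑ l, (O ^ k) j' l • z 0 l)
            - ∑ j', O i j' • ∑ s ∈ Finset.range k,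
                α s • ∑ l, (O ^ (k - 1 - s)) j' l • g l (z s l) := by
            simp_rw [smul_sub]
            rw [Finset.sum_sub_distrib]
        _ = (∑ l, (O ^ (k + 1)) i l • z 0 l)
            - ∑ s ∈ Finset.range k, α s • ∑ l, (O ^ (k - s)) i l • g l (z s l) := by
            congr 1
            · rw [flue_row_swap (fun j' => O i j') (fun a b => (O ^ k) a b) (fun l => z 0 l)]
              refine Finset.sum_congr rfl fun l _ => ?_
              rw [pow_succ', Matrix.mul_apply]
            · rw [flue_row_swap2]
              refine Finset.sum_congr rfl fun s hs => ?_
              congr 1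
              rw [flue_row_swap (fun j' => O i j') (fun a b => (O ^ (k - 1 - s)) a b) (fun l => g l (z s l))]
              refine Finset.sum_congr rfl fun l _ => ?_
              have hks : k - s = (k - 1 - s) + 1 := by
                have := Finset.mem_range.1 hs; omega
              rw [hks, pow_succ', Matrix.mul_apply]
  -- entrywise bound on row differences of powers
  set C : ℝ := 2 * max Γ 1 with hCdef
  have hC2 : (2 : ℝ) ≤ C := by
    have : (1 : ℝ) ≤ max Γ 1 := le_max_right _ _
    rw [hCdef]; linarith
  have hC0 : (0 : ℝ) < C := by linarith
  have hCΓ : 2 * Γ ≤ C := by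
    have : Γ ≤ max Γ 1 := le_max_left _ _
    rw [hCdef]; linarith
  have hEnt : ∀ (e : ℕ) (l : Fin N), |(O ^ e) j l - (O ^ e) q l| ≤ C * γ ^ e := by
    intro e l
    cases e with
    | zero =>
      simp only [pow_zero, Matrix.one_apply, mul_one]
      have h1 : |(if j = l then (1:ℝ) else 0) - (if q = l then (1:ℝ) else 0)| ≤ 1 := by
        split_ifs <;> norm_num
      linarith
    | succ n =>
      have h1 := hOP (n + 1) (by omega) j l
      have h2 := hOP (n + 1) (by omega) q l
      have hp : P j l = P q l := hP j q hj hq l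
      have key : (O ^ (n+1)) j l - (O ^ (n+1)) q l
          = ((O ^ (n+1)) j l - P j l) - ((O ^ (n+1)) q l - P q l) := by
        rw [hp]; ring
      have h3 : |(O ^ (n+1)) j l - (O ^ (n+1)) q l| ≤ Γ * γ ^ (n+1) + Γ * γ ^ (n+1) := by
        rw [key]
        exact le_trans (abs_sub _ _) (add_le_add h1 h2)
      have h4 : 0 ≤ γ ^ (n + 1) := by positivity
      nlinarith
  -- norm bound
  set Z : ℝ := ∑ l, ‖z 0 l‖ with hZdef
  have hZ0 : 0 ≤ Z := Finset.sum_nonneg fun l _ => norm_nonneg _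
  set conv : ℕ → ℝ := fun k => ∑ s ∈ Finset.range k, α s * γ ^ (k - 1 - s) with hconvdef
  have hconv_nonneg : ∀ k, 0 ≤ conv k :=
    fun k => Finset.sum_nonneg fun s _ => mul_nonneg (hα s) (pow_nonneg hγ0.le _)
  have hb : ∀ k, ‖z k j - z k q‖ ≤ C * Z * γ ^ k + C * G * N * conv k := by
    intro k
    have hdiff : z k j - z k q =
        (∑ l, ((O ^ k) j l - (O ^ k) q l) • z 0 l)
          - ∑ s ∈ Finset.range k, α s •
              ∑ l, ((O ^ (k - 1 - s)) j l - (O ^ (k - 1 - s)) q l) • g l (z s l) := by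
      rw [hclosed k j, hclosed k q]
      simp only [sub_smul, smul_sub, Finset.sum_sub_distrib]
      abel
    rw [hdiff]
    have hterm2 : ∀ s ∈ Finset.range k,
        ‖α s • ∑ l, ((O ^ (k - 1 - s)) j l - (O ^ (k - 1 - s)) q l) • g l (z s l)‖
          ≤ C * G * N * (α s * γ ^ (k - 1 - s)) := by
      intro s _
      rw [norm_smul, Real.norm_eq_abs, abs_of_nonneg (hα s)]
      have hin : ‖∑ l, ((O ^ (k - 1 - s)) j l - (O ^ (k - 1 - s)) q l) • g l (z s l)‖
          ≤ N * (C * γ ^ (k - 1 - s) * G) := by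
        refine le_trans (norm_sum_le _ _) ?_
        have hb1 : ∀ l : Fin N,
            ‖((O ^ (k - 1 - s)) j l - (O ^ (k - 1 - s)) q l) • g l (z s l)‖
              ≤ C * γ ^ (k - 1 - s) * G := by
          intro l
          rw [norm_smul, Real.norm_eq_abs]
          exact mul_le_mul (hEnt _ l) (hg l _) (norm_nonneg _)
            (mul_nonneg hC0.le (pow_nonneg hγ0.le _))
        refine le_trans (Finset.sum_le_sum fun l _ => hb1 l) ?_
        rw [Finset.sum_const, Finset.card_univ, Fintype.card_fin, nsmul_eq_mul]
      calc α s * ‖∑ l, ((O ^ (k-1-s)) j l - (O ^ (k-1-s)) q l) • g l (z s l)‖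
          ≤ α s * (N * (C * γ ^ (k - 1 - s) * G)) :=
            mul_le_mul_of_nonneg_left hin (hα s)
        _ = C * G * N * (α s * γ ^ (k - 1 - s)) := by ring
    have hterm1 : ‖∑ l, ((O ^ k) j l - (O ^ k) q l) • z 0 l‖ ≤ C * Z * γ ^ k := by
      refine le_trans (norm_sum_le _ _) ?_
      have h1 : ∀ l : Fin N, ‖((O ^ k) j l - (O ^ k) q l) • z 0 l‖
          ≤ (C * γ ^ k) * ‖z 0 l‖ := by
        intro l
        rw [norm_smul, Real.norm_eq_abs]
        exact mul_le_mul_of_nonneg_right (hEnt k l) (norm_nonneg _)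
      refine le_trans (Finset.sum_le_sum fun l _ => h1 l) ?_
      rw [← Finset.mul_sum]
      exact le_of_eq (by rw [hZdef]; ring)
    calc ‖(∑ l, ((O ^ k) j l - (O ^ k) q l) • z 0 l)
          - ∑ s ∈ Finset.range k, α s •
              ∑ l, ((O ^ (k-1-s)) j l - (O ^ (k-1-s)) q l) • g l (z s l)‖
        ≤ ‖∑ l, ((O ^ k) j l - (O ^ k) q l) • z 0 l‖
          + ‖∑ s ∈ Finset.range k, α s •
              ∑ l, ((O ^ (k-1-s)) j l - (O ^ (k-1-s)) q l) • g l (z s l)‖ :=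
          norm_sub_le _ _
      _ ≤ C * Z * γ ^ k
          + ∑ s ∈ Finset.range k, C * G * N * (α s * γ ^ (k - 1 - s)) := by
          exact add_le_add hterm1 (le_trans (norm_sum_le _ _)
            (Finset.sum_le_sum hterm2))
      _ = C * Z * γ ^ k + C * G * N * conv k := by
          rw [hconvdef, ← Finset.mul_sum]
  -- geometric partial sums bound
  have h1γ : 0 < 1 - γ := by linarith
  have hgeo : ∀ k : ℕ, (∑ s ∈ Finset.range k, γ ^ (k - 1 - s)) ≤ (1 - γ)⁻¹ := by
    intro k
    rw [Finset.sum_range_reflect (fun s => γ ^ s) k]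
    calc (∑ s ∈ Finset.range k, γ ^ s) ≤ ∑' s : ℕ, γ ^ s :=
        Summable.sum_le_tsum _ (fun i _ => by positivity)
          (summable_geometric_of_lt_one hγ0.le hγ1)
      _ = (1 - γ)⁻¹ := tsum_geometric_of_lt_one hγ0.le hγ1
  -- Cauchy-product summability
  have hsum_h : Summable (fun k => ∑ s ∈ Finset.range k, α s ^ 2 * γ ^ (k - 1 - s)) := by
    have hgs : Summable (fun n : ℕ => γ ^ n) := summable_geometric_of_lt_one hγ0.le hγ1
    have hf : Summable (fun k => ‖α k ^ 2‖) := by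
      refine hα2.congr fun k => ?_
      rw [Real.norm_eq_abs, abs_of_nonneg (sq_nonneg _)]
    have hgn : Summable (fun n : ℕ => ‖γ ^ n‖) := by
      refine hgs.congr fun n => ?_
      rw [Real.norm_eq_abs, abs_of_nonneg (by positivity)]
    have hc := summable_norm_sum_mul_range_of_summable_norm hf hgn
    have hc' : Summable (fun n => ∑ s ∈ Finset.range (n + 1), α s ^ 2 * γ ^ (n - s)) := by
      refine hc.congr fun n => ?_
      rw [Real.norm_eq_abs, abs_of_nonneg]
      exact Finset.sum_nonneg fun s _ => by positivity
    refine (summable_nat_add_iff 1).1 ?_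
    refine hc'.congr fun n => ?_
    simp only [Nat.add_sub_cancel]
  -- summable: α k * γ ^ k
  have hS1 : Summable (fun k => α k * γ ^ k) := by
    have hg2 : Summable (fun k : ℕ => (γ ^ 2) ^ k) :=
      summable_geometric_of_lt_one (by positivity) (by nlinarith)
    refine Summable.of_nonneg_of_le
      (fun k => mul_nonneg (hα k) (pow_nonneg hγ0.le _))
      (fun k => ?_) ((hα2.add hg2).div_const 2)
    have h : (γ ^ 2) ^ k = (γ ^ k) ^ 2 := by
      rw [← pow_mul, ← pow_mul, Nat.mul_comm]
    nlinarith [sq_nonneg (α k - γ ^ k)]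
  -- summable: α k * conv k
  have hS2 : Summable (fun k => α k * conv k) := by
    refine Summable.of_nonneg_of_le (fun k => mul_nonneg (hα k) (hconv_nonneg k))
      (fun k => ?_) (((hα2.mul_right (1 - γ)⁻¹).add hsum_h).div_const 2)
    have hstep1 : α k * conv k = ∑ s ∈ Finset.range k, α k * (α s * γ ^ (k - 1 - s)) := by
      rw [hconvdef]
      exact Finset.mul_sum _ _ _
    have hstep2 : ∀ s ∈ Finset.range k, α k * (α s * γ ^ (k - 1 - s))
        ≤ (α k ^ 2 * γ ^ (k - 1 - s) + α s ^ 2 * γ ^ (k - 1 - s)) / 2 := by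
      intro s _
      have h0 : (0 : ℝ) ≤ γ ^ (k - 1 - s) := by positivity
      nlinarith [mul_nonneg (sq_nonneg (α k - α s)) h0]
    calc α k * conv k
        ≤ ∑ s ∈ Finset.range k,
            (α k ^ 2 * γ ^ (k - 1 - s) + α s ^ 2 * γ ^ (k - 1 - s)) / 2 := by
          rw [hstep1]; exact Finset.sum_le_sum hstep2
      _ = (α k ^ 2 * (∑ s ∈ Finset.range k, γ ^ (k - 1 - s))
            + ∑ s ∈ Finset.range k, α s ^ 2 * γ ^ (k - 1 - s)) / 2 := by
          rw [← Finset.sum_div, Finset.sum_add_distrib, Finset.mul_sum]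
      _ ≤ (α k ^ 2 * (1 - γ)⁻¹
            + ∑ s ∈ Finset.range k, α s ^ 2 * γ ^ (k - 1 - s)) / 2 := by
          have := mul_le_mul_of_nonneg_left (hgeo k) (sq_nonneg (α k))
          linarith
  -- part (a)
  have hSc : Summable (fun k => C * Z * (α k * γ ^ k) + C * G * N * (α k * conv k)) :=
    (hS1.mul_left (C * Z)).add (hS2.mul_left (C * G * N))
  have hpartA : Summable (fun k => α k * ‖z k j - z k q‖) := by
    refine Summable.of_nonneg_of_le
      (fun k => mul_nonneg (hα k) (norm_nonneg _)) (fun k => ?_) hSc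
    calc α k * ‖z k j - z k q‖
        ≤ α k * (C * Z * γ ^ k + C * G * N * conv k) :=
          mul_le_mul_of_nonneg_left (hb k) (hα k)
      _ = C * Z * (α k * γ ^ k) + C * G * N * (α k * conv k) := by ring
  -- part (b)
  have hα0 : Tendsto α atTop (nhds 0) := by
    have h1 : Tendsto (fun k => α k ^ 2) atTop (nhds 0) := hα2.tendsto_atTop_zero
    have h2 := h1.sqrt
    simp only [Real.sqrt_zero] at h2
    exact h2.congr fun k => Real.sqrt_sq (hα k)
  have hconvrec : ∀ k, conv (k + 1) ≤ γ * conv k + α k := by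
    intro k
    have heq : conv (k + 1) = γ * conv k + α k := by
      rw [hconvdef]
      simp only [Nat.add_sub_cancel]
      rw [Finset.sum_range_succ, Nat.sub_self, pow_zero, mul_one]
      congr 1
      rw [Finset.mul_sum]
      refine Finset.sum_congr rfl fun s hs => ?_
      have h1 : k - s = (k - 1 - s) + 1 := by
        have := Finset.mem_range.1 hs; omega
      rw [h1, pow_succ']
      ring
    exact le_of_eq heq
  have hconv0 : Tendsto conv atTop (nhds 0) :=
    flue_tendsto_rec γ hγ0.le hγ1 conv α hconv_nonneg hconvrec hα0
  have hc0 : Tendsto (fun k => C * Z * γ ^ k + C * G * N * conv k) atTop (nhds 0) := by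
    have t1 := (tendsto_pow_atTop_nhds_zero_of_lt_one hγ0.le hγ1).const_mul (C * Z)
    have t2 := hconv0.const_mul (C * G * (N : ℝ))
    simpa using t1.add t2
  exact ⟨hpartA, squeeze_zero (fun k => norm_nonneg _) hb hc0⟩
end

section
/- Adopt the ITERATION SETTING. Assume additionally that P·O = P (matrix product). Then for every index j and every integer k ≥ 1: ‖Σ_{l=1}^N P_{j,l}·z_l(k) − z_j(k)‖ ≤ Γ·γ^k·Σ_{l=1}^N ‖z_l(0)‖ + N·G·Γ·Σ_{r=1}^{k−1} γ^{k−r}·α_{r−1} + G·(1 + Σ_{l=1}^N |P_{j,l}|)·α_{k−1}. -/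
/-- **Lemma 10 (L11) of the FLUE paper: the tracking bound.**
In the iteration setting, if moreover `P·O = P`, then for every index `j` and
every `k ≥ 1` the distance between the averaged proxy iterate
`Σ_l P_{jl}·z_l(k)` and the local iterate `z_j(k)` satisfies
`‖Σ_l P_{jl}·z_l(k) − z_j(k)‖ ≤ Γ·γ^k·Σ_l ‖z_l(0)‖
  + N·G·Γ·Σ_{r=1}^{k−1} γ^{k−r}·α_{r−1} + G·(1 + Σ_l |P_{jl}|)·α_{k−1}`. -/
theorem flue_lemma10_tracking_bound
    (N : ℕ) (hN : 0 < N)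
    (O P : Matrix (Fin N) (Fin N) ℝ)
    (Γ γ : ℝ) (hΓ : 0 < Γ) (hγ0 : 0 < γ) (hγ1 : γ < 1)
    (hOP : ∀ k : ℕ, 1 ≤ k → ∀ j l, |(O ^ k) j l - P j l| ≤ Γ * γ ^ k)
    (E : Type*) [NormedAddCommGroup E] [NormedSpace ℝ E]
    (G : ℝ) (hG : 0 ≤ G)
    (g : Fin N → E → E) (hg : ∀ i x, ‖g i x‖ ≤ G)
    (α : ℕ → ℝ) (hα : ∀ k, 0 ≤ α k)
    (z : ℕ → Fin N → E)
    (hz : ∀ (k : ℕ) (i : Fin N),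
      z (k + 1) i = (∑ j, O i j • z k j) - α k • g i (z k i))
    (hPO : P * O = P) :
    ∀ (j : Fin N) (k : ℕ), 1 ≤ k →
      ‖(∑ l, P j l • z k l) - z k j‖ ≤
        Γ * γ ^ k * (∑ l, ‖z 0 l‖)
        + (N : ℝ) * G * Γ * (∑ r ∈ Finset.Icc 1 (k - 1), γ ^ (k - r) * α (r - 1))
        + G * (1 + ∑ l, |P j l|) * α (k - 1) := by
  -- P * O^n = P
  have hPOn : ∀ n : ℕ, P * O ^ n = P := by
    intro n
    induction n with
    | zero => simp
    | succ n ih => rw [pow_succ, ← mul_assoc, ih, hPO]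
  -- closed form
  have hcf : ∀ (k : ℕ) (i : Fin N), z k i =
      (∑ m, (O ^ k) i m • z 0 m)
      - ∑ s ∈ Finset.range k, ∑ m, (α s * (O ^ (k - 1 - s)) i m) • g m (z s m) := by
    intro k
    induction k with
    | zero => intro i; simp [Matrix.one_apply]
    | succ k ih =>
      intro i
      rw [hz k i]
      have h1 : (∑ j, O i j • z k j)
          = (∑ m, (O ^ (k + 1)) i m • z 0 m)
            - ∑ s ∈ Finset.range k, ∑ m, (α s * (O ^ (k - s)) i m) • g m (z s m) := by
        calc (∑ j, O i j • z k j)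
            = ∑ j, (O i j • ∑ m, (O ^ k) j m • z 0 m
                - O i j • ∑ s ∈ Finset.range k, ∑ m,
                    (α s * (O ^ (k - 1 - s)) j m) • g m (z s m)) := by
              refine Finset.sum_congr rfl fun j _ => ?_
              rw [ih j, smul_sub]
          _ = (∑ j, O i j • ∑ m, (O ^ k) j m • z 0 m)
              - ∑ j, O i j • ∑ s ∈ Finset.range k, ∑ m,
                  (α s * (O ^ (k - 1 - s)) j m) • g m (z s m) := by
              rw [Finset.sum_sub_distrib]
          _ = (∑ m, (O ^ (k + 1)) i m • z 0 m)
            - ∑ s ∈ Finset.range k, ∑ m, (α s * (O ^ (k - s)) i m) • g m (z s m) := by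
              congr 1
              · calc (∑ j, O i j • ∑ m, (O ^ k) j m • z 0 m)
                    = ∑ j, ∑ m, (O i j * (O ^ k) j m) • z 0 m := by
                      simp [Finset.smul_sum, smul_smul]
                  _ = ∑ m, ∑ j, (O i j * (O ^ k) j m) • z 0 m := Finset.sum_comm
                  _ = ∑ m, (O ^ (k + 1)) i m • z 0 m := by
                      refine Finset.sum_congr rfl fun m _ => ?_
                      rw [← Finset.sum_smul, ← Matrix.mul_apply, ← pow_succ']
              · calc (∑ j, O i j • ∑ s ∈ Finset.range k, ∑ m,
                        (α s * (O ^ (k - 1 - s)) j m) • g m (z s m))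
                    = ∑ j, ∑ s ∈ Finset.range k, ∑ m,
                        (α s * (O i j * (O ^ (k - 1 - s)) j m)) • g m (z s m) := by
                      simp only [Finset.smul_sum, smul_smul]
                      refine Finset.sum_congr rfl fun j _ => ?_
                      refine Finset.sum_congr rfl fun s _ => ?_
                      refine Finset.sum_congr rfl fun m _ => ?_
                      ring_nf
                  _ = ∑ s ∈ Finset.range k, ∑ j, ∑ m,
                        (α s * (O i j * (O ^ (k - 1 - s)) j m)) • g m (z s m) :=
                      Finset.sum_comm
                  _ = ∑ s ∈ Finset.range k, ∑ m,
                        (α s * (O ^ (k - s)) i m) • g m (z s m) := by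
                      refine Finset.sum_congr rfl fun s hs => ?_
                      rw [Finset.sum_comm]
                      refine Finset.sum_congr rfl fun m _ => ?_
                      have hks : k - s = (k - 1 - s) + 1 := by
                        have := Finset.mem_range.mp hs; omega
                      rw [← Finset.sum_smul, ← Finset.mul_sum, ← Matrix.mul_apply,
                        hks, ← pow_succ']
      rw [h1, Finset.sum_range_succ, sub_sub]
      simp only [Nat.add_sub_cancel]
      congr 2
      simp [Matrix.one_apply, mul_ite, ite_smul]
  intro j k hk
  obtain ⟨K, rfl⟩ : ∃ K, k = K + 1 := ⟨k - 1, by omega⟩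
  -- closed form for the P-average
  have hP : (∑ l, P j l • z (K + 1) l)
      = (∑ m, P j m • z 0 m)
        - ∑ s ∈ Finset.range (K + 1), ∑ m, (α s * P j m) • g m (z s m) := by
    calc (∑ l, P j l • z (K + 1) l)
        = ∑ l, (P j l • ∑ m, (O ^ (K + 1)) l m • z 0 m
            - P j l • ∑ s ∈ Finset.range (K + 1), ∑ m,
                (α s * (O ^ (K + 1 - 1 - s)) l m) • g m (z s m)) := by
          refine Finset.sum_congr rfl fun l _ => ?_
          rw [hcf (K + 1) l, smul_sub]
      _ = (∑ l, P j l • ∑ m, (O ^ (K + 1)) l m • z 0 m)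
          - ∑ l, P j l • ∑ s ∈ Finset.range (K + 1), ∑ m,
              (α s * (O ^ (K + 1 - 1 - s)) l m) • g m (z s m) := by
          rw [Finset.sum_sub_distrib]
      _ = (∑ m, P j m • z 0 m)
          - ∑ s ∈ Finset.range (K + 1), ∑ m, (α s * P j m) • g m (z s m) := by
          congr 1
          · calc (∑ l, P j l • ∑ m, (O ^ (K + 1)) l m • z 0 m)
                = ∑ l, ∑ m, (P j l * (O ^ (K + 1)) l m) • z 0 m := by
                  simp [Finset.smul_sum, smul_smul]
              _ = ∑ m, ∑ l, (P j l * (O ^ (K + 1)) l m) • z 0 m := Finset.sum_comm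
              _ = ∑ m, P j m • z 0 m := by
                  refine Finset.sum_congr rfl fun m _ => ?_
                  rw [← Finset.sum_smul, ← Matrix.mul_apply, hPOn]
          · calc (∑ l, P j l • ∑ s ∈ Finset.range (K + 1), ∑ m,
                    (α s * (O ^ (K + 1 - 1 - s)) l m) • g m (z s m))
                = ∑ l, ∑ s ∈ Finset.range (K + 1), ∑ m,
                    (α s * (P j l * (O ^ (K + 1 - 1 - s)) l m)) • g m (z s m) := by
                  simp only [Finset.smul_sum, smul_smul]
                  refine Finset.sum_congr rfl fun l _ => ?_
                  refine Finset.sum_congr rfl fun s _ => ?_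
                  refine Finset.sum_congr rfl fun m _ => ?_
                  ring_nf
              _ = ∑ s ∈ Finset.range (K + 1), ∑ l, ∑ m,
                    (α s * (P j l * (O ^ (K + 1 - 1 - s)) l m)) • g m (z s m) :=
                  Finset.sum_comm
              _ = ∑ s ∈ Finset.range (K + 1), ∑ m,
                    (α s * P j m) • g m (z s m) := by
                  refine Finset.sum_congr rfl fun s hs => ?_
                  rw [Finset.sum_comm]
                  refine Finset.sum_congr rfl fun m _ => ?_
                  rw [← Finset.sum_smul, ← Finset.mul_sum, ← Matrix.mul_apply, hPOn]
  -- the difference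
  have hD : (∑ l, P j l • z (K + 1) l) - z (K + 1) j
      = (∑ m, (P j m - (O ^ (K + 1)) j m) • z 0 m)
        - ∑ s ∈ Finset.range (K + 1), ∑ m,
            (α s * (P j m - (O ^ (K - s)) j m)) • g m (z s m) := by
    rw [hP, hcf (K + 1) j]
    simp only [Nat.add_sub_cancel, sub_smul, mul_sub, Finset.sum_sub_distrib]
    abel
  have hb1 : ‖∑ m, (P j m - (O ^ (K + 1)) j m) • z 0 m‖
      ≤ Γ * γ ^ (K + 1) * ∑ l, ‖z 0 l‖ := by
    calc ‖∑ m, (P j m - (O ^ (K + 1)) j m) • z 0 m‖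
        ≤ ∑ m, ‖(P j m - (O ^ (K + 1)) j m) • z 0 m‖ := norm_sum_le _ _
      _ ≤ ∑ m, Γ * γ ^ (K + 1) * ‖z 0 m‖ := by
          refine Finset.sum_le_sum fun m _ => ?_
          rw [norm_smul, Real.norm_eq_abs]
          refine mul_le_mul_of_nonneg_right ?_ (norm_nonneg _)
          rw [abs_sub_comm]
          exact hOP (K + 1) (by omega) j m
      _ = Γ * γ ^ (K + 1) * ∑ l, ‖z 0 l‖ := by rw [← Finset.mul_sum]
  have hTs : ∀ s ∈ Finset.range K,
      ‖∑ m, (α s * (P j m - (O ^ (K - s)) j m)) • g m (z s m)‖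
        ≤ (N : ℝ) * G * Γ * (γ ^ (K - s) * α s) := by
    intro s hs
    have hs' := Finset.mem_range.mp hs
    calc ‖∑ m, (α s * (P j m - (O ^ (K - s)) j m)) • g m (z s m)‖
        ≤ ∑ m, ‖(α s * (P j m - (O ^ (K - s)) j m)) • g m (z s m)‖ :=
          norm_sum_le _ _
      _ ≤ ∑ _m : Fin N, α s * (Γ * γ ^ (K - s)) * G := by
          refine Finset.sum_le_sum fun m _ => ?_
          rw [norm_smul, Real.norm_eq_abs, abs_mul, abs_of_nonneg (hα s)]
          have hd : |P j m - (O ^ (K - s)) j m| ≤ Γ * γ ^ (K - s) := by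
            rw [abs_sub_comm]; exact hOP (K - s) (by omega) j m
          have hgm := hg m (z s m)
          gcongr <;> first
            | exact hα s
            | exact mul_nonneg (hα s) (by positivity)
      _ = (N : ℝ) * G * Γ * (γ ^ (K - s) * α s) := by
          rw [Finset.sum_const, Finset.card_univ, Fintype.card_fin, nsmul_eq_mul]
          ring
  have hTK : ‖∑ m, (α K * (P j m - (O ^ (K - K)) j m)) • g m (z K m)‖
      ≤ G * (1 + ∑ l, |P j l|) * α K := by
    calc ‖∑ m, (α K * (P j m - (O ^ (K - K)) j m)) • g m (z K m)‖
        ≤ ∑ m, ‖(α K * (P j m - (O ^ (K - K)) j m)) • g m (z K m)‖ :=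
          norm_sum_le _ _
      _ ≤ ∑ m, α K * (|P j m| + |(O ^ (K - K)) j m|) * G := by
          refine Finset.sum_le_sum fun m _ => ?_
          rw [norm_smul, Real.norm_eq_abs, abs_mul, abs_of_nonneg (hα K)]
          have hd : |P j m - (O ^ (K - K)) j m| ≤ |P j m| + |(O ^ (K - K)) j m| :=
            abs_sub _ _
          have hgm := hg m (z K m)
          gcongr <;> first
            | exact hα K
            | exact mul_nonneg (hα K) (by positivity)
      _ = α K * ((∑ l, |P j l|) + ∑ m, |(O ^ (K - K)) j m|) * G := by
          rw [← Finset.sum_mul, ← Finset.mul_sum, Finset.sum_add_distrib]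
      _ = G * (1 + ∑ l, |P j l|) * α K := by
          have h1 : (∑ m, |(O ^ (K - K)) j m|) = 1 := by
            simp [Nat.sub_self, Matrix.one_apply, apply_ite abs]
          rw [h1]; ring
  have hb2 : ‖∑ s ∈ Finset.range (K + 1), ∑ m,
        (α s * (P j m - (O ^ (K - s)) j m)) • g m (z s m)‖
      ≤ (N : ℝ) * G * Γ * (∑ r ∈ Finset.Icc 1 K, γ ^ (K + 1 - r) * α (r - 1))
        + G * (1 + ∑ l, |P j l|) * α K := by
    rw [Finset.sum_range_succ]
    refine (norm_add_le _ _).trans (add_le_add ?_ hTK)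
    calc ‖∑ s ∈ Finset.range K, ∑ m,
            (α s * (P j m - (O ^ (K - s)) j m)) • g m (z s m)‖
        ≤ ∑ s ∈ Finset.range K, ‖∑ m,
            (α s * (P j m - (O ^ (K - s)) j m)) • g m (z s m)‖ := norm_sum_le _ _
      _ ≤ ∑ s ∈ Finset.range K, (N : ℝ) * G * Γ * (γ ^ (K - s) * α s) :=
          Finset.sum_le_sum hTs
      _ = (N : ℝ) * G * Γ * (∑ s ∈ Finset.range K, γ ^ (K - s) * α s) := by
          rw [← Finset.mul_sum]
      _ = (N : ℝ) * G * Γ * (∑ r ∈ Finset.Icc 1 K, γ ^ (K + 1 - r) * α (r - 1)) := by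
          congr 1
          refine Finset.sum_nbij' (fun s => s + 1) (fun r => r - 1)
            ?_ ?_ ?_ ?_ ?_
          · intro a ha; simp at ha ⊢; omega
          · intro a ha; simp at ha ⊢; omega
          · intro a _; simp
          · intro a ha; simp at ha ⊢; omega
          · intro a ha
            simp only [Nat.add_sub_cancel]
            congr 2
            omega
  have hfin : K + 1 - 1 = K := by omega
  rw [hD, hfin]
  calc ‖(∑ m, (P j m - (O ^ (K + 1)) j m) • z 0 m)
        - ∑ s ∈ Finset.range (K + 1), ∑ m,
            (α s * (P j m - (O ^ (K - s)) j m)) • g m (z s m)‖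
      ≤ ‖∑ m, (P j m - (O ^ (K + 1)) j m) • z 0 m‖
        + ‖∑ s ∈ Finset.range (K + 1), ∑ m,
            (α s * (P j m - (O ^ (K - s)) j m)) • g m (z s m)‖ := norm_sub_le _ _
    _ ≤ Γ * γ ^ (K + 1) * (∑ l, ‖z 0 l‖)
        + ((N : ℝ) * G * Γ * (∑ r ∈ Finset.Icc 1 K, γ ^ (K + 1 - r) * α (r - 1))
          + G * (1 + ∑ l, |P j l|) * α K) := add_le_add hb1 hb2
    _ = _ := by ring
end

section
/- Adopt the ITERATION SETTING. Assume additionally that P·O = P (matrix product) and that Σ_{k=0}^∞ α_k² < ∞. Then for every index j: Σ_{k=0}^∞ α_k · ‖Σ_{l=1}^N P_{j,l}·z_l(k) − z_j(k)‖ < ∞. -/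
lemma flue_aux_mulvec {N : ℕ} {E : Type*} [AddCommGroup E] [Module ℝ E]
    (A B : Matrix (Fin N) (Fin N) ℝ) (v : Fin N → E) (i : Fin N) :
    ∑ l, A i l • (∑ m, B l m • v m) = ∑ m, (A * B) i m • v m := by
  simp only [Finset.smul_sum, smul_smul]
  rw [Finset.sum_comm]
  simp [Matrix.mul_apply, Finset.sum_smul]

lemma flue_geom_le (γ : ℝ) (hγ0 : 0 ≤ γ) (hγ1 : γ < 1) (n : ℕ) :
    ∑ t ∈ Finset.range n, γ ^ t ≤ 1 / (1 - γ) := by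
  have := Summable.sum_le_tsum (Finset.range n) (fun i _ => by positivity)
    (summable_geometric_of_lt_one hγ0 hγ1)
  rw [tsum_geometric_of_lt_one hγ0 hγ1] at this
  simpa [one_div] using this

lemma flue_tri (F : ℕ → ℕ → ℝ) (K : ℕ) :
    ∑ k ∈ Finset.range K, ∑ s ∈ Finset.range k, F s k
    = ∑ s ∈ Finset.range K, ∑ k ∈ Finset.Ico (s+1) K, F s k := by
  simp only [Finset.range_eq_Ico]
  rw [← Finset.sum_Ico_Ico_comm' 0 K F]

lemma flue_unroll {N : ℕ} {E : Type*} [AddCommGroup E] [Module ℝ E]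
    (O : Matrix (Fin N) (Fin N) ℝ) (g : Fin N → E → E) (α : ℕ → ℝ)
    (z : ℕ → Fin N → E)
    (hz : ∀ (k : ℕ) (i : Fin N),
      z (k + 1) i = (∑ j, O i j • z k j) - α k • g i (z k i)) :
    ∀ (k : ℕ) (i : Fin N), z k i = (∑ l, (O ^ k) i l • z 0 l)
      - ∑ s ∈ Finset.range k, α s • ∑ l, (O ^ (k - s - 1)) i l • g l (z s l) := by
  intro k
  induction k with
  | zero => intro i; simp [Matrix.one_apply]
  | succ k ih =>
    intro i
    rw [hz k i]
    have h1 : (∑ jj, O i jj • z k jj)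
        = (∑ l, (O ^ (k+1)) i l • z 0 l)
          - ∑ s ∈ Finset.range k, α s • ∑ l, (O ^ (k + 1 - s - 1)) i l • g l (z s l) := by
      calc (∑ jj, O i jj • z k jj)
          = ∑ jj, O i jj • ((∑ l, (O ^ k) jj l • z 0 l)
              - ∑ s ∈ Finset.range k, α s • ∑ l, (O ^ (k - s - 1)) jj l • g l (z s l)) :=
            Finset.sum_congr rfl fun jj _ => by rw [← ih jj]
        _ = (∑ jj, O i jj • (∑ l, (O ^ k) jj l • z 0 l))
              - ∑ jj, O i jj •
                  ∑ s ∈ Finset.range k, α s • ∑ l, (O ^ (k - s - 1)) jj l • g l (z s l) := by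
            simp [smul_sub, Finset.sum_sub_distrib]
        _ = (∑ l, (O ^ (k+1)) i l • z 0 l)
              - ∑ s ∈ Finset.range k, α s • ∑ l, (O ^ (k + 1 - s - 1)) i l • g l (z s l) := by
            congr 1
            · rw [flue_aux_mulvec O (O ^ k), ← pow_succ' O k]
            · simp only [Finset.smul_sum]
              rw [Finset.sum_comm]
              refine Finset.sum_congr rfl fun s hs => ?_
              have hsk : s < k := Finset.mem_range.mp hs
              rw [Finset.sum_comm]
              refine Finset.sum_congr rfl fun l _ => ?_
              simp only [smul_smul]
              rw [← Finset.sum_smul]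
              congr 1
              have he : k + 1 - s - 1 = (k - s - 1) + 1 := by omega
              rw [he, pow_succ' O (k - s - 1), Matrix.mul_apply, Finset.mul_sum]
              exact Finset.sum_congr rfl fun y _ => by ring
    rw [h1, Finset.sum_range_succ]
    have h2 : α k • ∑ l, (O ^ (k + 1 - k - 1)) i l • g l (z k l) = α k • g i (z k i) := by
      have : k + 1 - k - 1 = 0 := by omega
      rw [this, pow_zero]
      simp [Matrix.one_apply]
    rw [h2]
    abel

/-- **Lemma 11 (L12) of the FLUE paper.**
In the iteration setting, if moreover `P·O = P` and `Σ α_k² < ∞`, then for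
every index `j` the step-size-weighted distance between the averaged proxy
iterates and the local iterates is summable:
`Σ_k α_k·‖Σ_l P_{jl}·z_l(k) − z_j(k)‖ < ∞`. -/
theorem flue_lemma11_summable_tracking
    (N : ℕ) (hN : 0 < N)
    (O P : Matrix (Fin N) (Fin N) ℝ)
    (Γ γ : ℝ) (hΓ : 0 < Γ) (hγ0 : 0 < γ) (hγ1 : γ < 1)
    (hOP : ∀ k : ℕ, 1 ≤ k → ∀ j l, |(O ^ k) j l - P j l| ≤ Γ * γ ^ k)
    (E : Type*) [NormedAddCommGroup E] [NormedSpace ℝ E]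
    (G : ℝ) (hG : 0 ≤ G)
    (g : Fin N → E → E) (hg : ∀ i x, ‖g i x‖ ≤ G)
    (α : ℕ → ℝ) (hα : ∀ k, 0 ≤ α k)
    (z : ℕ → Fin N → E)
    (hz : ∀ (k : ℕ) (i : Fin N),
      z (k + 1) i = (∑ j, O i j • z k j) - α k • g i (z k i))
    (hPO : P * O = P)
    (hα2 : Summable fun k => (α k) ^ 2) :
    ∀ j : Fin N, Summable (fun k => α k * ‖(∑ l, P j l • z k l) - z k j‖) := by
  intro j
  have hPOk : ∀ m : ℕ, P * O ^ m = P := by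
    intro m
    induction m with
    | zero => simp
    | succ n ih => rw [pow_succ, ← Matrix.mul_assoc, ih, hPO]
  have hunroll := flue_unroll O g α z hz
  set C : ℝ := Γ + ∑ q, |P j q - (1 : Matrix (Fin N) (Fin N) ℝ) j q| with hCdef
  have hS0 : (0:ℝ) ≤ ∑ q, |P j q - (1 : Matrix (Fin N) (Fin N) ℝ) j q| :=
    Finset.sum_nonneg fun q _ => abs_nonneg _
  have hC0 : 0 < C := by rw [hCdef]; linarith
  have hC : ∀ (m : ℕ) (l : Fin N), |P j l - (O ^ m) j l| ≤ C * γ ^ m := by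
    intro m l
    match m with
    | 0 =>
      rw [pow_zero, pow_zero, mul_one]
      have h1 : |P j l - (1 : Matrix (Fin N) (Fin N) ℝ) j l|
          ≤ ∑ q, |P j q - (1 : Matrix (Fin N) (Fin N) ℝ) j q| :=
        Finset.single_le_sum (f := fun q => |P j q - (1 : Matrix (Fin N) (Fin N) ℝ) j q|)
          (fun q _ => abs_nonneg _) (Finset.mem_univ l)
      rw [hCdef]; linarith
    | m + 1 =>
      rw [abs_sub_comm]
      have h1 := hOP (m+1) (by omega) j l
      have h2 : (0:ℝ) < γ ^ (m+1) := by positivity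
      rw [hCdef]
      nlinarith
  set M : ℝ := ∑ l, ‖z 0 l‖ with hMdef
  have hM0 : 0 ≤ M := Finset.sum_nonneg fun l _ => norm_nonneg _
  -- difference formula
  have hdiff : ∀ k : ℕ, (∑ l, P j l • z k l) - z k j
      = (∑ m, (P j m - (O ^ k) j m) • z 0 m)
        - ∑ s ∈ Finset.range k,
            α s • ∑ m, (P j m - (O ^ (k - s - 1)) j m) • g m (z s m) := by
    intro k
    have hw : (∑ l, P j l • z k l)
        = (∑ m, P j m • z 0 m)
          - ∑ s ∈ Finset.range k, α s • ∑ m, P j m • g m (z s m) := by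
      calc (∑ l, P j l • z k l)
          = ∑ l, P j l • ((∑ m, (O ^ k) l m • z 0 m)
              - ∑ s ∈ Finset.range k, α s • ∑ m, (O ^ (k - s - 1)) l m • g m (z s m)) :=
            Finset.sum_congr rfl fun l _ => by rw [← hunroll k l]
        _ = (∑ l, P j l • (∑ m, (O ^ k) l m • z 0 m))
              - ∑ l, P j l •
                  ∑ s ∈ Finset.range k, α s • ∑ m, (O ^ (k - s - 1)) l m • g m (z s m) := by
            simp [smul_sub, Finset.sum_sub_distrib]
        _ = (∑ m, P j m • z 0 m)
              - ∑ s ∈ Finset.range k, α s • ∑ m, P j m • g m (z s m) := by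
            congr 1
            · rw [flue_aux_mulvec P (O ^ k), hPOk k]
            · simp only [Finset.smul_sum]
              rw [Finset.sum_comm]
              refine Finset.sum_congr rfl fun s hs => ?_
              rw [Finset.sum_comm]
              refine Finset.sum_congr rfl fun m _ => ?_
              simp only [smul_smul]
              rw [← Finset.sum_smul]
              congr 1
              have hPm : P j m = (P * O ^ (k - s - 1)) j m := by rw [hPOk]
              rw [hPm, Matrix.mul_apply, Finset.mul_sum]
              exact Finset.sum_congr rfl fun l _ => by ring
    rw [hw, hunroll k j]
    simp only [sub_smul, Finset.sum_sub_distrib, smul_sub]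
    abel
  -- norm bound
  have hbound : ∀ k : ℕ, ‖(∑ l, P j l • z k l) - z k j‖
      ≤ C * M * γ ^ k
        + (C * ((N:ℝ) * G)) * ∑ s ∈ Finset.range k, α s * γ ^ (k - s - 1) := by
    intro k
    rw [hdiff k]
    have hγk : (0:ℝ) ≤ γ ^ k := by positivity
    have hb1 : ‖∑ m, (P j m - (O ^ k) j m) • z 0 m‖ ≤ C * M * γ ^ k := by
      calc ‖∑ m, (P j m - (O ^ k) j m) • z 0 m‖
          ≤ ∑ m, ‖(P j m - (O ^ k) j m) • z 0 m‖ := norm_sum_le _ _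
        _ ≤ ∑ m, (C * γ ^ k) * ‖z 0 m‖ := by
            refine Finset.sum_le_sum fun m _ => ?_
            rw [norm_smul, Real.norm_eq_abs]
            exact mul_le_mul_of_nonneg_right (hC k m) (norm_nonneg _)
        _ = C * M * γ ^ k := by rw [← Finset.mul_sum, hMdef]; ring
    have hb2 : ‖∑ s ∈ Finset.range k,
          α s • ∑ m, (P j m - (O ^ (k - s - 1)) j m) • g m (z s m)‖
        ≤ (C * ((N:ℝ) * G)) * ∑ s ∈ Finset.range k, α s * γ ^ (k - s - 1) := by
      calc ‖∑ s ∈ Finset.range k,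
            α s • ∑ m, (P j m - (O ^ (k - s - 1)) j m) • g m (z s m)‖
          ≤ ∑ s ∈ Finset.range k,
              ‖α s • ∑ m, (P j m - (O ^ (k - s - 1)) j m) • g m (z s m)‖ := norm_sum_le _ _
        _ ≤ ∑ s ∈ Finset.range k, (C * ((N:ℝ) * G)) * (α s * γ ^ (k - s - 1)) := by
            refine Finset.sum_le_sum fun s _ => ?_
            rw [norm_smul, Real.norm_eq_abs, abs_of_nonneg (hα s)]
            have hin : ‖∑ m, (P j m - (O ^ (k - s - 1)) j m) • g m (z s m)‖
                ≤ (N:ℝ) * ((C * γ ^ (k - s - 1)) * G) := by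
              calc ‖∑ m, (P j m - (O ^ (k - s - 1)) j m) • g m (z s m)‖
                  ≤ ∑ m, ‖(P j m - (O ^ (k - s - 1)) j m) • g m (z s m)‖ := norm_sum_le _ _
                _ ≤ ∑ _m : Fin N, (C * γ ^ (k - s - 1)) * G := by
                    refine Finset.sum_le_sum fun m _ => ?_
                    rw [norm_smul, Real.norm_eq_abs]
                    have h1 := hC (k - s - 1) m
                    have h2 := hg m (z s m)
                    have h3 : (0:ℝ) ≤ C * γ ^ (k - s - 1) := by positivity
                    exact mul_le_mul h1 h2 (norm_nonneg _) h3
                _ = (N:ℝ) * ((C * γ ^ (k - s - 1)) * G) := by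
                    simp [Finset.sum_const, Finset.card_univ, mul_comm]
            calc α s * ‖∑ m, (P j m - (O ^ (k - s - 1)) j m) • g m (z s m)‖
                ≤ α s * ((N:ℝ) * ((C * γ ^ (k - s - 1)) * G)) :=
                  mul_le_mul_of_nonneg_left hin (hα s)
              _ = (C * ((N:ℝ) * G)) * (α s * γ ^ (k - s - 1)) := by ring
        _ = (C * ((N:ℝ) * G)) * ∑ s ∈ Finset.range k, α s * γ ^ (k - s - 1) := by
            rw [Finset.mul_sum]
    calc ‖(∑ m, (P j m - (O ^ k) j m) • z 0 m)
          - ∑ s ∈ Finset.range k,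
              α s • ∑ m, (P j m - (O ^ (k - s - 1)) j m) • g m (z s m)‖
        ≤ ‖∑ m, (P j m - (O ^ k) j m) • z 0 m‖
          + ‖∑ s ∈ Finset.range k,
              α s • ∑ m, (P j m - (O ^ (k - s - 1)) j m) • g m (z s m)‖ := norm_sub_le _ _
      _ ≤ C * M * γ ^ k
          + (C * ((N:ℝ) * G)) * ∑ s ∈ Finset.range k, α s * γ ^ (k - s - 1) := by
          exact add_le_add hb1 hb2
  -- summability of the two majorant pieces
  have S1 : Summable fun k => α k * γ ^ k := by
    have hsum : Summable fun k => ((α k) ^ 2 + (γ ^ 2) ^ k) / 2 := by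
      have hg2a : (0:ℝ) ≤ γ ^ 2 := sq_nonneg γ
      have hg2b : γ ^ 2 < 1 := by nlinarith
      have hg2 : Summable fun k : ℕ => (γ ^ 2) ^ k :=
        summable_geometric_of_lt_one hg2a hg2b
      exact (hα2.add hg2).div_const 2
    refine Summable.of_nonneg_of_le
      (fun k => mul_nonneg (hα k) (by positivity)) (fun k => ?_) hsum
    have h1 : (γ ^ 2) ^ k = (γ ^ k) ^ 2 := by
      rw [← pow_mul, ← pow_mul, Nat.mul_comm]
    rw [h1]
    nlinarith [sq_nonneg (α k - γ ^ k)]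
  have S2 : Summable fun k => α k * ∑ s ∈ Finset.range k, α s * γ ^ (k - s - 1) := by
    set A : ℝ := ∑' k, (α k) ^ 2 with hAdef
    have hApart : ∀ K : ℕ, ∑ k ∈ Finset.range K, (α k) ^ 2 ≤ A :=
      fun K => Summable.sum_le_tsum (Finset.range K) (fun i _ => sq_nonneg _) hα2
    have hA0 : 0 ≤ A := tsum_nonneg fun k => sq_nonneg _
    have h1γ : (0:ℝ) < 1 - γ := by linarith
    apply summable_of_sum_range_le (c := A * (1 / (1 - γ)))
    · intro k
      exact mul_nonneg (hα k)
        (Finset.sum_nonneg fun s _ => mul_nonneg (hα s) (by positivity))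
    · intro K
      have step1 : ∑ k ∈ Finset.range K, α k * ∑ s ∈ Finset.range k, α s * γ ^ (k - s - 1)
          = ∑ k ∈ Finset.range K, ∑ s ∈ Finset.range k,
              α k * α s * γ ^ (k - s - 1) := by
        refine Finset.sum_congr rfl fun k _ => ?_
        rw [Finset.mul_sum]
        exact Finset.sum_congr rfl fun s _ => by ring
      rw [step1]
      have step2 : ∑ k ∈ Finset.range K, ∑ s ∈ Finset.range k, α k * α s * γ ^ (k - s - 1)
          ≤ ∑ k ∈ Finset.range K, ∑ s ∈ Finset.range k,
              ((α k) ^ 2 / 2 + (α s) ^ 2 / 2) * γ ^ (k - s - 1) := by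
        refine Finset.sum_le_sum fun k _ => Finset.sum_le_sum fun s _ => ?_
        have he : (0:ℝ) ≤ γ ^ (k - s - 1) := by positivity
        nlinarith [sq_nonneg (α k - α s)]
      refine le_trans step2 ?_
      have split : ∑ k ∈ Finset.range K, ∑ s ∈ Finset.range k,
            ((α k) ^ 2 / 2 + (α s) ^ 2 / 2) * γ ^ (k - s - 1)
          = (∑ k ∈ Finset.range K, ∑ s ∈ Finset.range k, (α k) ^ 2 / 2 * γ ^ (k - s - 1))
            + ∑ k ∈ Finset.range K, ∑ s ∈ Finset.range k, (α s) ^ 2 / 2 * γ ^ (k - s - 1) := by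
        rw [← Finset.sum_add_distrib]
        refine Finset.sum_congr rfl fun k _ => ?_
        rw [← Finset.sum_add_distrib]
        exact Finset.sum_congr rfl fun s _ => by ring
      rw [split]
      have part1 : ∑ k ∈ Finset.range K, ∑ s ∈ Finset.range k,
            (α k) ^ 2 / 2 * γ ^ (k - s - 1) ≤ A / 2 * (1 / (1 - γ)) := by
        calc ∑ k ∈ Finset.range K, ∑ s ∈ Finset.range k, (α k) ^ 2 / 2 * γ ^ (k - s - 1)
            = ∑ k ∈ Finset.range K, (α k) ^ 2 / 2 * ∑ s ∈ Finset.range k, γ ^ (k - s - 1) := by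
              exact Finset.sum_congr rfl fun k _ => by rw [Finset.mul_sum]
          _ ≤ ∑ k ∈ Finset.range K, (α k) ^ 2 / 2 * (1 / (1 - γ)) := by
              refine Finset.sum_le_sum fun k _ => ?_
              refine mul_le_mul_of_nonneg_left ?_ (by positivity)
              have hre : ∑ s ∈ Finset.range k, γ ^ (k - s - 1)
                  = ∑ s ∈ Finset.range k, γ ^ s := by
                have h0 : ∀ s, k - s - 1 = k - 1 - s := fun s => by omega
                simp_rw [h0]
                exact Finset.sum_range_reflect (fun t => γ ^ t) k
              rw [hre]
              exact flue_geom_le γ hγ0.le hγ1 k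
          _ = (∑ k ∈ Finset.range K, (α k) ^ 2 / 2) * (1 / (1 - γ)) := by
              rw [← Finset.sum_mul]
          _ ≤ A / 2 * (1 / (1 - γ)) := by
              refine mul_le_mul_of_nonneg_right ?_ (by positivity)
              have := hApart K
              rw [← Finset.sum_div]
              linarith
      have part2 : ∑ k ∈ Finset.range K, ∑ s ∈ Finset.range k,
            (α s) ^ 2 / 2 * γ ^ (k - s - 1) ≤ A / 2 * (1 / (1 - γ)) := by
        rw [flue_tri (fun s k => (α s) ^ 2 / 2 * γ ^ (k - s - 1)) K]
        calc ∑ s ∈ Finset.range K, ∑ k ∈ Finset.Ico (s+1) K,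
              (α s) ^ 2 / 2 * γ ^ (k - s - 1)
            = ∑ s ∈ Finset.range K, (α s) ^ 2 / 2 * ∑ k ∈ Finset.Ico (s+1) K,
                γ ^ (k - s - 1) := by
              exact Finset.sum_congr rfl fun s _ => by rw [Finset.mul_sum]
          _ ≤ ∑ s ∈ Finset.range K, (α s) ^ 2 / 2 * (1 / (1 - γ)) := by
              refine Finset.sum_le_sum fun s _ => ?_
              refine mul_le_mul_of_nonneg_left ?_ (by positivity)
              have hre : ∑ k ∈ Finset.Ico (s+1) K, γ ^ (k - s - 1)
                  = ∑ t ∈ Finset.range (K - (s+1)), γ ^ t := by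
                rw [Finset.sum_Ico_eq_sum_range]
                refine Finset.sum_congr rfl fun t _ => ?_
                congr 1
                omega
              rw [hre]
              exact flue_geom_le γ hγ0.le hγ1 _
          _ = (∑ s ∈ Finset.range K, (α s) ^ 2 / 2) * (1 / (1 - γ)) := by
              rw [← Finset.sum_mul]
          _ ≤ A / 2 * (1 / (1 - γ)) := by
              refine mul_le_mul_of_nonneg_right ?_ (by positivity)
              have := hApart K
              rw [← Finset.sum_div]
              linarith
      linarith
  -- conclusion
  have hmaj : Summable fun k =>
      (C * M) * (α k * γ ^ k)
      + (C * ((N:ℝ) * G)) * (α k * ∑ s ∈ Finset.range k, α s * γ ^ (k - s - 1)) :=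
    (S1.mul_left (C * M)).add (S2.mul_left (C * ((N:ℝ) * G)))
  refine Summable.of_nonneg_of_le
    (fun k => mul_nonneg (hα k) (norm_nonneg _)) (fun k => ?_) hmaj
  have hb := hbound k
  have := mul_le_mul_of_nonneg_left hb (hα k)
  calc α k * ‖(∑ l, P j l • z k l) - z k j‖
      ≤ α k * (C * M * γ ^ k
          + (C * ((N:ℝ) * G)) * ∑ s ∈ Finset.range k, α s * γ ^ (k - s - 1)) := this
    _ = (C * M) * (α k * γ ^ k)
        + (C * ((N:ℝ) * G)) * (α k * ∑ s ∈ Finset.range k, α s * γ ^ (k - s - 1)) := by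
        ring
end

section
/- Let E be a real inner product space, let f : E → ℝ be convex and differentiable with gradient ∇f satisfying ‖∇f(u)‖ ≤ L for all u ∈ E, let ω > 0, let (α_k)_{k≥0} be nonnegative reals, let k' ∈ ℕ, and let y, w : ℕ → E be sequences satisfying y(k+1) = y(k) − ω·α_k·∇f(w(k)) for every k ≥ k'. Then for every x ∈ E and every integer K ≥ k': 2ω·Σ_{k=k'}^{K} α_k·(f(w(k)) − f(x)) ≤ ‖y(k') − x‖² − ‖y(K+1) − x‖² + 2ωL·Σ_{k=k'}^{K} α_k·‖y(k) − w(k)‖ + ω²L²·Σ_{k=k'}^{K} α_k². -/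
open scoped RealInnerProductSpace

lemma flue_grad_ineq (E : Type*) [NormedAddCommGroup E] [InnerProductSpace ℝ E]
    (f : E → ℝ) (hconv : ConvexOn ℝ Set.univ f)
    (f' : E → E) (hf' : ∀ u, HasFDerivAt f (innerSL ℝ (f' u)) u)
    (u v : E) : ⟪f' u, v - u⟫ ≤ f v - f u := by
  set g : ℝ → E := fun t => u + t • (v - u) with hg
  have hgconv : ConvexOn ℝ Set.univ (f ∘ g) := by
    have := hconv.comp_affineMap (AffineMap.lineMap u v : ℝ →ᵃ[ℝ] E)
    have hg' : g = AffineMap.lineMap u v := by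
      ext t; simp only [hg, AffineMap.lineMap_apply_module']; abel
    rw [hg']; simpa using this
  have hgd : ∀ t : ℝ, HasDerivAt (f ∘ g) ⟪f' (g t), v - u⟫ t := by
    intro t
    have hline : HasDerivAt g (v - u) t := by
      rw [hg]; simpa using ((hasDerivAt_id t).smul_const (v - u)).const_add u
    simpa using (hf' (g t)).comp_hasDerivAt t hline
  have := hgconv.le_slope_of_hasDerivAt (Set.mem_univ 0) (Set.mem_univ 1) one_pos (hgd 0)
  simpa [slope_def_field, hg] using this

/-- **Lemma 13 (L14) of the FLUE paper.**
If `f` is convex and differentiable on a real inner product space with gradient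
`f'` bounded by `L`, and the sequence `y` performs scaled gradient steps
`y(k+1) = y(k) − ω·α_k·∇f(w(k))` for `k ≥ k'`, then for every `x` and every
`K ≥ k'`:
`2ω·Σ_{k=k'}^{K} α_k·(f(w(k)) − f(x)) ≤ ‖y(k') − x‖² − ‖y(K+1) − x‖²
  + 2ωL·Σ_{k=k'}^{K} α_k·‖y(k) − w(k)‖ + ω²L²·Σ_{k=k'}^{K} α_k²`. -/
theorem flue_lemma13_descent_inequality
    (E : Type*) [NormedAddCommGroup E] [InnerProductSpace ℝ E]
    (f : E → ℝ) (hconv : ConvexOn ℝ Set.univ f)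
    (f' : E → E) (hf' : ∀ u, HasFDerivAt f (innerSL ℝ (f' u)) u)
    (L : ℝ) (hL : ∀ u, ‖f' u‖ ≤ L)
    (ω : ℝ) (hω : 0 < ω)
    (α : ℕ → ℝ) (hα : ∀ k, 0 ≤ α k)
    (k' : ℕ) (y w : ℕ → E)
    (hy : ∀ k, k' ≤ k → y (k + 1) = y k - (ω * α k) • f' (w k)) :
    ∀ (x : E) (K : ℕ), k' ≤ K →
      2 * ω * ∑ k ∈ Finset.Icc k' K, α k * (f (w k) - f x) ≤
        ‖y k' - x‖ ^ 2 - ‖y (K + 1) - x‖ ^ 2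
        + 2 * ω * L * ∑ k ∈ Finset.Icc k' K, α k * ‖y k - w k‖
        + ω ^ 2 * L ^ 2 * ∑ k ∈ Finset.Icc k' K, (α k) ^ 2 := by
  intro x
  have step : ∀ k, k' ≤ k →
      2 * ω * (α k * (f (w k) - f x)) ≤
        ‖y k - x‖ ^ 2 - ‖y (k + 1) - x‖ ^ 2
        + 2 * ω * L * (α k * ‖y k - w k‖) + ω ^ 2 * L ^ 2 * (α k) ^ 2 := by
    intro k hk
    set c := ω * α k with hcdef
    have hc : 0 ≤ c := mul_nonneg hω.le (hα k)
    set g := f' (w k) with hgdef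
    have hyk : y (k + 1) - x = (y k - x) - c • g := by
      rw [hy k hk]; abel
    have hexp : ‖y (k + 1) - x‖ ^ 2
        = ‖y k - x‖ ^ 2 - 2 * c * ⟪g, y k - x⟫ + c ^ 2 * ‖g‖ ^ 2 := by
      rw [hyk, @norm_sub_sq_real, real_inner_smul_right, norm_smul,
        real_inner_comm, Real.norm_eq_abs, mul_pow, sq_abs]
      ring
    have h1 : f (w k) - f x ≤ ⟪g, w k - x⟫ := by
      have h := flue_grad_ineq E f hconv f' hf' (w k) x
      have hneg : ⟪g, x - w k⟫ = -⟪g, w k - x⟫ := by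
        rw [← inner_neg_right]; congr 1; abel
      rw [hgdef] at *; linarith [h, hneg.symm.le, hneg.le]
    have hsplit : ⟪g, w k - x⟫ = ⟪g, y k - x⟫ - ⟪g, y k - w k⟫ := by
      rw [← inner_sub_right]; congr 1; abel
    have hcs : |⟪g, y k - w k⟫| ≤ L * ‖y k - w k‖ := by
      refine (abs_real_inner_le_norm g _).trans ?_
      exact mul_le_mul_of_nonneg_right (hL _) (norm_nonneg _)
    have h2 : f (w k) - f x ≤ ⟪g, y k - x⟫ + L * ‖y k - w k‖ := by
      have := (neg_abs_le ⟪g, y k - w k⟫)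
      have := (abs_le.mp hcs).1
      linarith [h1, hsplit.le, hsplit.ge]
    have h3 : ‖g‖ ^ 2 ≤ L ^ 2 := by
      have h0 : (0:ℝ) ≤ ‖g‖ := norm_nonneg _
      nlinarith [hL (w k)]
    have h4 : c ^ 2 * ‖g‖ ^ 2 ≤ ω ^ 2 * L ^ 2 * (α k) ^ 2 := by
      have : c ^ 2 * ‖g‖ ^ 2 ≤ c ^ 2 * L ^ 2 :=
        mul_le_mul_of_nonneg_left h3 (sq_nonneg c)
      calc c ^ 2 * ‖g‖ ^ 2 ≤ c ^ 2 * L ^ 2 := this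
        _ = ω ^ 2 * L ^ 2 * (α k) ^ 2 := by rw [hcdef]; ring
    have h5 : 2 * c * (f (w k) - f x) ≤ 2 * c * (⟪g, y k - x⟫ + L * ‖y k - w k‖) := by
      apply mul_le_mul_of_nonneg_left h2
      positivity
    have hrw1 : 2 * ω * (α k * (f (w k) - f x)) = 2 * c * (f (w k) - f x) := by
      rw [hcdef]; ring
    have hrw2 : 2 * ω * L * (α k * ‖y k - w k‖) = 2 * c * (L * ‖y k - w k‖) := by
      rw [hcdef]; ring
    rw [hexp, hrw1, hrw2]
    nlinarith [h4, h5]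
  intro K hK
  induction K, hK using Nat.le_induction with
  | base =>
      simp only [Finset.Icc_self, Finset.sum_singleton]
      exact step k' le_rfl
  | succ K hK ih =>
      have hmem : K + 1 ∉ Finset.Icc k' K := by simp
      have hins : Finset.Icc k' (K + 1) = insert (K + 1) (Finset.Icc k' K) := by
        ext n
        simp only [Finset.mem_Icc, Finset.mem_insert]
        omega
      rw [hins, Finset.sum_insert hmem, Finset.sum_insert hmem, Finset.sum_insert hmem]
      have hstep := step (K + 1) (by omega)
      have := ih
      ring_nf
      ring_nf at hstep this
      linarith
end

section
/- Let E be a real inner product space, let f : E → ℝ be convex and differentiable with gradient ∇f satisfying ‖∇f(u)‖ ≤ L for all u ∈ E, and suppose f attains a global minimum at x* ∈ E (f(x*) ≤ f(x) for all x). Let ω > 0, let (α_k)_{k≥0} be nonnegative reals with Σ_{k=0}^∞ α_k = ∞ and Σ_{k=0}^∞ α_k² < ∞, let k' ∈ ℕ, and let y, w : ℕ → E satisfy y(k+1) = y(k) − ω·α_k·∇f(w(k)) for every k ≥ k' and Σ_{k=0}^∞ α_k·‖y(k) − w(k)‖ < ∞. Then liminf_{k→∞} f(w(k)) = f(x*).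 -/
open Filter Set
open scoped Topology
local notation "⟪" x ", " y "⟫" => @inner ℝ _ _ x y

lemma subgrad {E : Type*} [NormedAddCommGroup E] [InnerProductSpace ℝ E]
    (f : E → ℝ) (hconv : ConvexOn ℝ Set.univ f) (g : E) (x : E)
    (hf : HasFDerivAt f (innerSL ℝ g) x) (z : E) :
    f x + ⟪g, z - x⟫ ≤ f z := by
  have h1 : HasDerivAt (fun t : ℝ => x + t • (z - x)) (z - x) 0 := by
    simpa using ((hasDerivAt_id (0 : ℝ)).smul_const (z - x)).const_add x
  have hd : HasDerivAt (fun t : ℝ => f (x + t • (z - x))) (⟪g, z - x⟫) 0 := by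
    have hfx : HasFDerivAt f (innerSL ℝ g) (x + (0 : ℝ) • (z - x)) := by simpa using hf
    exact hfx.comp_hasDerivAt 0 h1
  have hslope :
      Tendsto (slope (fun t : ℝ => f (x + t • (z - x))) 0) (𝓝[>] 0) (𝓝 (⟪g, z - x⟫)) :=
    (hasDerivAt_iff_tendsto_slope.mp hd).mono_left
      (nhdsWithin_mono _ (fun t ht => ne_of_gt ht))
  have hbound : ∀ᶠ t in 𝓝[>] (0 : ℝ),
      slope (fun t : ℝ => f (x + t • (z - x))) 0 t ≤ f z - f x := by
    filter_upwards [Ioc_mem_nhdsGT_of_mem (Set.mem_Ico.mpr ⟨le_rfl, one_pos⟩)] with t ht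
    obtain ⟨ht0, ht1⟩ := ht
    have hc := hconv.2 (Set.mem_univ x) (Set.mem_univ z)
      (by linarith : (0:ℝ) ≤ 1 - t) ht0.le (by ring)
    have hxe : (1 - t) • x + t • z = x + t • (z - x) := by module
    rw [hxe] at hc
    rw [slope_def_field]
    rw [div_le_iff₀ (by linarith : (0:ℝ) < t - 0)]
    simp only [zero_smul, add_zero, smul_eq_mul] at hc ⊢
    nlinarith
  have hle := le_of_tendsto hslope hbound
  linarith

/-- **Analytic core of Lemma 14 (L15) / Theorems 2 and 5 of the FLUE paper.**
If `f` is convex and differentiable with gradient `f'` bounded by `L` and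
attains its global minimum at `x*`, the step sizes `α_k ≥ 0` satisfy
`Σ α_k = ∞` and `Σ α_k² < ∞`, the sequence `y` performs the scaled gradient
steps `y(k+1) = y(k) − ω·α_k·∇f(w(k))` for `k ≥ k'`, and the tracking error is
summable (`Σ α_k·‖y(k) − w(k)‖ < ∞`), then
`liminf_{k→∞} f(w(k)) = f(x*)`. -/
theorem flue_lemma14_liminf_optimal
    (E : Type*) [NormedAddCommGroup E] [InnerProductSpace ℝ E]
    (f : E → ℝ) (hconv : ConvexOn ℝ Set.univ f)
    (f' : E → E) (hf' : ∀ u, HasFDerivAt f (innerSL ℝ (f' u)) u)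
    (L : ℝ) (hL : ∀ u, ‖f' u‖ ≤ L)
    (xstar : E) (hmin : ∀ x, f xstar ≤ f x)
    (ω : ℝ) (hω : 0 < ω)
    (α : ℕ → ℝ) (hα : ∀ k, 0 ≤ α k)
    (hdiv : Filter.Tendsto (fun K => ∑ k ∈ Finset.range K, α k)
      Filter.atTop Filter.atTop)
    (hα2 : Summable fun k => (α k) ^ 2)
    (k' : ℕ) (y w : ℕ → E)
    (hy : ∀ k, k' ≤ k → y (k + 1) = y k - (ω * α k) • f' (w k))
    (htrack : Summable fun k => α k * ‖y k - w k‖) :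
    Filter.liminf (fun k => f (w k)) Filter.atTop = f xstar := by
  have hLnn : 0 ≤ L := le_trans (norm_nonneg _) (hL xstar)
  have key : ∀ ε > (0:ℝ), ∃ᶠ k in atTop, f (w k) < f xstar + ε := by
    intro ε hε
    by_contra hcon
    rw [Filter.not_frequently] at hcon
    obtain ⟨N, hN⟩ := Filter.eventually_atTop.mp hcon
    set M := max k' N with hM
    set D : ℕ → ℝ := fun k => ‖y k - xstar‖ ^ 2 with hD
    set e : ℕ → ℝ := fun k => ω^2 * L^2 * (α k)^2 + 2*ω*L * (α k * ‖y k - w k‖) with he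
    have hsum_e : Summable e := (hα2.mul_left (ω^2 * L^2)).add (htrack.mul_left (2*ω*L))
    have he_nn : ∀ k, 0 ≤ e k := by
      intro k
      have h1 : (0:ℝ) ≤ ω^2 * L^2 * (α k)^2 := by positivity
      have h2 : (0:ℝ) ≤ 2*ω*L * (α k * ‖y k - w k‖) :=
        mul_nonneg (by positivity) (mul_nonneg (hα k) (norm_nonneg _))
      exact add_nonneg h1 h2
    have step : ∀ k, M ≤ k → 2*ω*(α k)*ε ≤ D k - D (k+1) + e k := by
      intro k hk
      have hk' : k' ≤ k := le_trans (le_max_left _ _) hk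
      have hkN : N ≤ k := le_trans (le_max_right _ _) hk
      have hfk : f xstar + ε ≤ f (w k) := not_lt.mp (hN k hkN)
      have hyk := hy k hk'
      have hsub : f (w k) + ⟪f' (w k), xstar - w k⟫ ≤ f xstar :=
        subgrad f hconv _ _ (hf' (w k)) xstar
      have hg : ‖f' (w k)‖ ≤ L := hL _
      have hexp : D (k+1) = D k - 2*(ω*α k)*(⟪y k - xstar, f' (w k)⟫)
          + (ω*α k)^2 * ‖f' (w k)‖^2 := by
        simp only [hD, hyk]
        rw [show y k - (ω * α k) • f' (w k) - xstar
              = (y k - xstar) - (ω * α k) • f' (w k) by abel]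
        rw [norm_sub_sq_real, real_inner_smul_right, norm_smul]
        rw [Real.norm_eq_abs, mul_pow, sq_abs]
        ring
      have hinner : (f (w k) - f xstar) - L * ‖y k - w k‖ ≤ ⟪y k - xstar, f' (w k)⟫ := by
        have e1 : ⟪f' (w k), xstar - w k⟫ = -(⟪f' (w k), w k - xstar⟫) := by
          rw [show xstar - w k = -(w k - xstar) by abel, inner_neg_right]
        have h1 : f (w k) - f xstar ≤ ⟪f' (w k), w k - xstar⟫ := by
          rw [e1] at hsub; linarith
        have h2 : -(L * ‖y k - w k‖) ≤ ⟪f' (w k), y k - w k⟫ := by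
          have ha := abs_real_inner_le_norm (f' (w k)) (y k - w k)
          have hb : ‖f' (w k)‖ * ‖y k - w k‖ ≤ L * ‖y k - w k‖ :=
            mul_le_mul_of_nonneg_right hg (norm_nonneg _)
          have hc := neg_abs_le (⟪f' (w k), y k - w k⟫)
          linarith
        have hsplit : ⟪y k - xstar, f' (w k)⟫
            = ⟪f' (w k), w k - xstar⟫ + ⟪f' (w k), y k - w k⟫ := by
          rw [real_inner_comm, ← inner_add_right,
            show (w k - xstar) + (y k - w k) = y k - xstar by abel]
        linarith
      have hc : 0 ≤ ω * α k := mul_nonneg hω.le (hα k)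
      have hgb : (ω*α k)^2 * ‖f' (w k)‖^2 ≤ ω^2 * L^2 * (α k)^2 := by
        have h1 : ‖f' (w k)‖^2 ≤ L^2 := by nlinarith [norm_nonneg (f' (w k))]
        nlinarith [sq_nonneg (ω * α k)]
      have hε' : ε ≤ f (w k) - f xstar := by linarith
      have hint1 := mul_le_mul_of_nonneg_left hinner
        (by positivity : (0:ℝ) ≤ 2*(ω*α k))
      have hint2 := mul_le_mul_of_nonneg_left hε' hc
      simp only [he]
      nlinarith [hint1, hint2]
    set C := D M + ∑' k, e k with hC
    have hbound : ∀ n, 2*ω*ε * (∑ j ∈ Finset.range n, α (M + j)) ≤ C := by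
      intro n
      have h2 : ∑ j ∈ Finset.range n, (2*ω*(α (M+j))*ε)
          ≤ ∑ j ∈ Finset.range n, ((D (M+j) - D (M+j+1)) + e (M+j)) :=
        Finset.sum_le_sum (fun j _ => step _ (Nat.le_add_right _ _))
      rw [Finset.sum_add_distrib] at h2
      have h3 : ∑ j ∈ Finset.range n, (D (M+j) - D (M+j+1)) = D M - D (M+n) := by
        have h := Finset.sum_range_sub' (fun j => D (M+j)) n
        simpa only [Nat.add_zero, Nat.add_assoc] using h
      have h4 : ∑ j ∈ Finset.range n, e (M+j) ≤ ∑' k, e k := by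
        rw [show ∑ j ∈ Finset.range n, e (M+j) = ∑ k ∈ Finset.Ico M (M+n), e k by
          rw [Finset.sum_Ico_eq_sum_range]; simp]
        exact hsum_e.sum_le_tsum _ (fun k _ => he_nn k)
      have hDnn : 0 ≤ D (M+n) := sq_nonneg _
      have h5 : 2*ω*ε * (∑ j ∈ Finset.range n, α (M + j))
          = ∑ j ∈ Finset.range n, (2*ω*(α (M+j))*ε) := by
        rw [Finset.mul_sum]; exact Finset.sum_congr rfl (fun j _ => by ring)
      rw [h5, hC]
      linarith
    have hdiv' : Tendsto (fun n => ∑ j ∈ Finset.range n, α (M + j)) atTop atTop := by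
      have heq : ∀ n, ∑ j ∈ Finset.range n, α (M + j)
          = (∑ k ∈ Finset.range (M + n), α k) - ∑ k ∈ Finset.range M, α k := by
        intro n
        rw [eq_sub_iff_add_eq, add_comm, ← Finset.sum_range_add]
      have hMn : Tendsto (fun n : ℕ => M + n) atTop atTop :=
        tendsto_atTop_atTop_of_monotone (fun a b h => by omega) (fun b => ⟨b, by omega⟩)
      have h1 : Tendsto (fun n => ∑ k ∈ Finset.range (M + n), α k) atTop atTop :=
        hdiv.comp hMn
      have h2 := tendsto_atTop_add_const_right atTop (-(∑ k ∈ Finset.range M, α k)) h1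
      refine Tendsto.congr (fun n => ?_) h2
      rw [heq n]; ring
    have h2ωε : (0:ℝ) < 2*ω*ε := by positivity
    obtain ⟨n, hn⟩ := (hdiv'.eventually_ge_atTop ((C + 1)/(2*ω*ε))).exists
    have hbn := hbound n
    rw [div_le_iff₀ h2ωε] at hn
    nlinarith
  rw [Filter.liminf_eq]
  have hgreat : IsGreatest {a | ∀ᶠ k in atTop, a ≤ f (w k)} (f xstar) := by
    constructor
    · exact Filter.Eventually.of_forall (fun k => hmin _)
    · intro a ha
      by_contra hca
      push_neg at hca
      have hε : (0:ℝ) < a - f xstar := sub_pos.mpr hca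
      obtain ⟨k, hk1, hk2⟩ := ((key _ hε).and_eventually ha).exists
      have : f xstar + (a - f xstar) = a := by ring
      rw [this] at hk1
      exact absurd hk2 (not_le.mpr hk1)
  exact hgreat.csSup_eq
end

section
/- Let k₀ ∈ ℕ, let A ≥ 0 and B ≥ 0 be reals, and let b : ℕ → ℝ be a sequence with b_k ≥ 0 for all k, such that for every integer K ≥ k₀: Σ_{k=k₀}^{K} (k+1)^{−1/2}·b_k ≤ A + B·Σ_{k=k₀}^{K} (k+1)^{−1}. Then there exists a constant C > 0 such that for every integer K ≥ k₀: min_{k₀ ≤ k ≤ K} b_k ≤ C·(1 + log(K+1)) / √(K+1). -/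
lemma flue_harmonic_le (n : ℕ) (hn : 1 ≤ n) :
    ∑ k ∈ Finset.range n, ((k : ℝ) + 1)⁻¹ ≤ 1 + Real.log n := by
  induction n with
  | zero => omega
  | succ m ih =>
    rcases Nat.lt_or_ge 1 (m + 1) with h1 | h1
    · have hm : 1 ≤ m := by omega
      have hmpos : (0:ℝ) < m := by exact_mod_cast hm
      rw [Finset.sum_range_succ]
      have key : ((m : ℝ) + 1)⁻¹ ≤ Real.log ((m:ℝ)+1) - Real.log m := by
        have h2 : Real.log ((m:ℝ)/((m:ℝ)+1)) ≤ (m:ℝ)/((m:ℝ)+1) - 1 :=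
          Real.log_le_sub_one_of_pos (by positivity)
        rw [Real.log_div (by positivity) (by positivity)] at h2
        have h4 : (m:ℝ)/((m:ℝ)+1) - 1 = -(((m:ℝ)+1)⁻¹) := by field_simp; ring
        linarith [h4 ▸ h2]
      have := ih hm
      push_cast
      linarith
    · have hm0 : m = 0 := by omega
      subst hm0
      simp

/-- **Convergence rate of the FLUE iterates (rate-of-convergence section of
the paper).**
If the nonnegative sequence `b` satisfies, for every `K ≥ k₀`,
`Σ_{k=k₀}^{K} (k+1)^{−1/2}·b_k ≤ A + B·Σ_{k=k₀}^{K} (k+1)^{−1}`,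
then there is a constant `C > 0` such that for every `K ≥ k₀`,
`min_{k₀ ≤ k ≤ K} b_k ≤ C·(1 + log(K+1))/√(K+1)`;
i.e. the optimality gap decays like `O(log k / √k)`. -/
theorem flue_convergence_rate
    (k₀ : ℕ) (A B : ℝ) (hA : 0 ≤ A) (hB : 0 ≤ B)
    (b : ℕ → ℝ) (hb : ∀ k, 0 ≤ b k)
    (h : ∀ K : ℕ, k₀ ≤ K →
      ∑ k ∈ Finset.Icc k₀ K, ((k : ℝ) + 1) ^ (-(1 : ℝ) / 2) * b k ≤
        A + B * ∑ k ∈ Finset.Icc k₀ K, ((k : ℝ) + 1)⁻¹) :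
    ∃ C : ℝ, 0 < C ∧ ∀ (K : ℕ) (hK : k₀ ≤ K),
      (Finset.Icc k₀ K).inf' (Finset.nonempty_Icc.mpr hK) b ≤
        C * (1 + Real.log ((K : ℝ) + 1)) / Real.sqrt ((K : ℝ) + 1) := by
  refine ⟨((k₀:ℝ)+1) * (A + B) + 1, by positivity, ?_⟩
  intro K hK
  set m := (Finset.Icc k₀ K).inf' (Finset.nonempty_Icc.mpr hK) b with hm
  set s := Real.sqrt ((K:ℝ)+1) with hs
  have hs0 : 0 < s := Real.sqrt_pos.mpr (by positivity)
  have hss : s * s = (K:ℝ) + 1 := Real.mul_self_sqrt (by positivity)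
  have hm0 : 0 ≤ m := Finset.le_inf' _ _ fun k _ => hb k
  set L := 1 + Real.log ((K:ℝ)+1) with hL
  have hL1 : 1 ≤ L := by
    have : 0 ≤ Real.log ((K:ℝ)+1) := Real.log_nonneg (by linarith)
    simp only [hL]; linarith
  have hS2 : ∑ k ∈ Finset.Icc k₀ K, ((k : ℝ) + 1)⁻¹ ≤ L := by
    have hsub : Finset.Icc k₀ K ⊆ Finset.range (K+1) := by
      intro k hk
      simp only [Finset.mem_Icc] at hk
      simp only [Finset.mem_range]; omega
    have hh := flue_harmonic_le (K+1) (by omega)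
    push_cast at hh
    calc ∑ k ∈ Finset.Icc k₀ K, ((k : ℝ) + 1)⁻¹
        ≤ ∑ k ∈ Finset.range (K+1), ((k : ℝ) + 1)⁻¹ :=
          Finset.sum_le_sum_of_subset_of_nonneg hsub (fun k _ _ => by positivity)
      _ ≤ 1 + Real.log ((K:ℝ)+1) := hh
      _ = L := hL.symm
  set S1 := ∑ k ∈ Finset.Icc k₀ K, ((k : ℝ) + 1) ^ (-(1 : ℝ) / 2) with hS1
  have hw : ((K:ℝ)+1) ^ (-(1 : ℝ) / 2) = s⁻¹ := by
    rw [show (-(1:ℝ)/2) = -(1/2) by ring, Real.rpow_neg (by positivity),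
      ← Real.sqrt_eq_rpow]
  have hcard : ((Finset.Icc k₀ K).card : ℝ) = (K:ℝ) + 1 - k₀ := by
    rw [Nat.card_Icc]
    push_cast [Nat.cast_sub (by omega : k₀ ≤ K + 1)]
    ring
  have hS1lb : ((K:ℝ) + 1 - k₀) * s⁻¹ ≤ S1 := by
    have := Finset.card_nsmul_le_sum (Finset.Icc k₀ K)
      (fun k => ((k : ℝ) + 1) ^ (-(1 : ℝ) / 2)) (((K:ℝ)+1) ^ (-(1 : ℝ) / 2))
      (fun k hk => by
        apply Real.rpow_le_rpow_of_nonpos (by positivity)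
        · simp only [Finset.mem_Icc] at hk
          have : (k:ℝ) ≤ K := by exact_mod_cast hk.2
          linarith
        · norm_num)
    rw [nsmul_eq_mul, hcard, hw] at this
    exact this
  have h1 : m * S1 ≤ ∑ k ∈ Finset.Icc k₀ K, ((k : ℝ) + 1) ^ (-(1 : ℝ) / 2) * b k := by
    rw [hS1, Finset.mul_sum]
    apply Finset.sum_le_sum
    intro k hk
    rw [mul_comm]
    exact mul_le_mul_of_nonneg_left (Finset.inf'_le _ hk) (by positivity)
  have hmain : m * S1 ≤ A + B * L := by
    have h2 := h K hK
    have h3 : B * (∑ k ∈ Finset.Icc k₀ K, ((k : ℝ) + 1)⁻¹) ≤ B * L :=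
      mul_le_mul_of_nonneg_left hS2 hB
    clear_value m s L S1
    linarith
  have hk0K : (k₀:ℝ) ≤ K := by exact_mod_cast hK
  have hS1' : s ≤ ((k₀:ℝ)+1) * S1 := by
    have h9 : ((K:ℝ)+1) ≤ ((k₀:ℝ)+1) * ((K:ℝ)+1-k₀) := by nlinarith
    have h10 : s = ((K:ℝ)+1) * s⁻¹ := by
      field_simp
      linarith [hss]
    calc s = ((K:ℝ)+1) * s⁻¹ := h10
      _ ≤ (((k₀:ℝ)+1) * ((K:ℝ)+1-k₀)) * s⁻¹ :=
          mul_le_mul_of_nonneg_right h9 (by positivity)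
      _ = ((k₀:ℝ)+1) * (((K:ℝ)+1-k₀) * s⁻¹) := by ring
      _ ≤ ((k₀:ℝ)+1) * S1 := mul_le_mul_of_nonneg_left hS1lb (by positivity)
  have hfin : m * s ≤ (((k₀:ℝ)+1)*(A+B)+1) * L := by
    have h8 : A + B*L ≤ (A+B)*L := by nlinarith
    calc m * s ≤ m * (((k₀:ℝ)+1) * S1) := mul_le_mul_of_nonneg_left hS1' hm0
      _ = ((k₀:ℝ)+1) * (m * S1) := by ring
      _ ≤ ((k₀:ℝ)+1) * (A + B*L) := mul_le_mul_of_nonneg_left hmain (by positivity)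
      _ ≤ ((k₀:ℝ)+1) * ((A+B)*L) := mul_le_mul_of_nonneg_left h8 (by positivity)
      _ = ((k₀:ℝ)+1)*(A+B) * L := by ring
      _ ≤ (((k₀:ℝ)+1)*(A+B)+1) * L := by nlinarith
  rw [div_eq_mul_inv]
  calc m = m * s * s⁻¹ := by field_simp
    _ ≤ (((k₀:ℝ)+1)*(A+B)+1) * L * s⁻¹ :=
        mul_le_mul_of_nonneg_right hfin (by positivity)
end
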